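/- arXiv:1210.8316 — 2 statements merged into one kernel-verified Lean document; each statement's English description precedes it below -/
import Mathlib

section
/- Let d ≥ 1, p ≥ 1, let g : Fin d → Fin p be a surjective grouping map encoding a partition ω of d, and let n : Fin p → ℕ with n k ≥ 1. Let S^ω be the subspace of ω-partially-symmetric tensors T : (Π i : Fin d, Fin (n (g i))) → ℝ, and let C be the set of all rank-one tensors (including zero) in the full tensor space, i.e., tensors of the form idx ↦ ∏_i (w i)(idx i) with w i ∈ ℝ^{n (g i)}. Then for almost every T ∈ S^ω (with respect to Haar/Lebesgue measure on the subspace S^ω) there exists a tuple y with y j ∈ ℝ^{n (g j)} such that: the rank-one tensor ⊗_j y_j is a best rank one approximation of T (a nearest point to T in C in Hilbert–Schmidt norm), and every best rank one approximation S of T is of the form S(idx) = ∏_j (y (σ j))(idx j) for some permutation σ of Fin d satisfying g ∘ σ = g. -/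
open MeasureTheory

/-- The space of `d`-mode real tensors with dimensions `n (g i)` in mode `i`,
equipped with the Hilbert–Schmidt (Euclidean) norm. -/
abbrev TensorSpace (d p : ℕ) (g : Fin d → Fin p) (n : Fin p → ℕ) :=
  EuclideanSpace ℝ (∀ i : Fin d, Fin (n (g i)))

/-- The subspace `S^ω` of tensors which are partially symmetric with respect to
the partition of `[d]` encoded by the grouping map `g`. -/
def Somega (d p : ℕ) (g : Fin d → Fin p) (n : Fin p → ℕ) :
    Submodule ℝ (TensorSpace d p g n) where
  carrier := {T | ∀ σ : Equiv.Perm (Fin d), ∀ hσ : ∀ j, g (σ j) = g j,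
    ∀ idx : ∀ i : Fin d, Fin (n (g i)),
      T (fun j => Fin.cast (congrArg n (hσ j)) (idx (σ j))) = T idx}
  add_mem' := by
    intro a b ha hb σ hσ idx
    show a _ + b _ = a idx + b idx
    rw [ha σ hσ idx, hb σ hσ idx]
  zero_mem' := by intro σ hσ idx; rfl
  smul_mem' := by
    intro c a ha σ hσ idx
    show c • a _ = c • a idx
    rw [ha σ hσ idx]

/-- The set of rank one tensors (including zero). -/
def rankOneSet (d p : ℕ) (g : Fin d → Fin p) (n : Fin p → ℕ) :
    Set (TensorSpace d p g n) :=
  {S | ∃ w : ∀ i : Fin d, Fin (n (g i)) → ℝ, ∀ idx, S idx = ∏ i, w i (idx i)}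


open Finset RealInnerProductSpace

section Aux

variable {X : Type*} [AddCommGroup X] [Module ℝ X]

lemma aux_exists_forall_ne_zero {ι : Type*} (s : Finset ι) (m : ι → X →ₗ[ℝ] ℝ)
    (hm : ∀ i ∈ s, m i ≠ 0) : ∃ x : X, ∀ i ∈ s, m i x ≠ 0 := by
  classical
  induction s using Finset.induction_on with
  | empty => exact ⟨0, by simp⟩
  | @insert a t hat ih =>
    obtain ⟨x₀, hx₀⟩ := ih (fun i hi => hm i (mem_insert_of_mem hi))
    obtain ⟨e, he⟩ : ∃ e, m a e ≠ 0 := by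
      by_contra hcon
      push_neg at hcon
      exact hm a (mem_insert_self a t) (by ext x; simp [hcon x])
    obtain ⟨r, hr⟩ := Infinite.exists_notMem_finset
      ((insert a t).image (fun i => -m i x₀ / m i e))
    refine ⟨x₀ + r • e, ?_⟩
    intro i hi h0
    rw [map_add, _root_.map_smul, smul_eq_mul] at h0
    by_cases hie : m i e = 0
    · rcases mem_insert.1 hi with rfl | hit
      · exact he hie
      · exact hx₀ i hit (by simpa [hie] using h0)
    · apply hr
      refine mem_image.2 ⟨i, hi, ?_⟩
      field_simp
      linarith [h0]

lemma aux_exists_ker_forall_ne_zero {ι : Type*} (s : Finset ι) (ℓ₀ : X →ₗ[ℝ] ℝ)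
    (m : ι → X →ₗ[ℝ] ℝ) (hm : ∀ i ∈ s, ¬ ∃ c : ℝ, m i = c • ℓ₀) :
    ∃ x : X, ℓ₀ x = 0 ∧ ∀ i ∈ s, m i x ≠ 0 := by
  classical
  set W := LinearMap.ker ℓ₀
  have hsub : ∀ i ∈ s, (m i).comp W.subtype ≠ 0 := by
    intro i hi h0
    apply hm i hi
    have hker : ∀ x, ℓ₀ x = 0 → m i x = 0 := by
      intro x hx
      have := congrFun (congrArg DFunLike.coe h0) ⟨x, hx⟩
      simpa using this
    by_cases hℓ : ℓ₀ = 0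
    · refine ⟨0, ?_⟩
      ext x
      simp [hker x (by simp [hℓ])]
    · obtain ⟨e, he⟩ : ∃ e, ℓ₀ e ≠ 0 := by
        by_contra hcon
        push_neg at hcon
        exact hℓ (by ext x; simp [hcon x])
      refine ⟨m i e / ℓ₀ e, ?_⟩
      ext x
      have hmem : ℓ₀ (x - (ℓ₀ x / ℓ₀ e) • e) = 0 := by
        simp only [map_sub, _root_.map_smul, smul_eq_mul]
        field_simp
        ring
      have := hker _ hmem
      rw [map_sub, _root_.map_smul, smul_eq_mul, sub_eq_zero] at this
      simp only [LinearMap.smul_apply, smul_eq_mul]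
      rw [this]
      field_simp
  obtain ⟨x, hx⟩ := aux_exists_forall_ne_zero s (fun i => (m i).comp W.subtype) hsub
  exact ⟨(x : X), x.2, fun i hi => hx i hi⟩

lemma aux_cancel {ι₁ ι₂ : Type*} (t₁ : Finset ι₁) (t₂ : Finset ι₂)
    (ℓ₀ : X →ₗ[ℝ] ℝ) (hℓ₀ : ℓ₀ ≠ 0)
    (f : ι₁ → X →ₗ[ℝ] ℝ) (g : ι₂ → X →ₗ[ℝ] ℝ) (K₁ K₂ : ℝ)
    (h : ∀ x, ℓ₀ x * (K₁ * ∏ i ∈ t₁, f i x) = ℓ₀ x * (K₂ * ∏ i ∈ t₂, g i x)) :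
    ∀ x, (K₁ * ∏ i ∈ t₁, f i x) = K₂ * ∏ i ∈ t₂, g i x := by
  obtain ⟨e, he⟩ : ∃ e, ℓ₀ e ≠ 0 := by
    by_contra hcon
    push_neg at hcon
    exact hℓ₀ (by ext x; simp [hcon x])
  intro x₀
  set F : ℝ → ℝ := fun r => K₁ * ∏ i ∈ t₁, f i (x₀ + r • e) with hF
  set G : ℝ → ℝ := fun r => K₂ * ∏ i ∈ t₂, g i (x₀ + r • e) with hG
  have hline : ∀ (u : X →ₗ[ℝ] ℝ),
      (fun r : ℝ => u (x₀ + r • e)) = fun r => u x₀ + r * u e := by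
    intro u
    ext r
    simp [map_add, _root_.map_smul, smul_eq_mul]
  have hFc : Continuous F := by
    apply continuous_const.mul
    apply continuous_finset_prod
    intro i _
    rw [hline (f i)]
    fun_prop
  have hGc : Continuous G := by
    apply continuous_const.mul
    apply continuous_finset_prod
    intro i _
    rw [hline (g i)]
    fun_prop
  have hEq : F = G := by
    apply Continuous.ext_on (dense_compl_singleton (-ℓ₀ x₀ / ℓ₀ e)) hFc hGc
    intro r hr
    have hne : ℓ₀ (x₀ + r • e) ≠ 0 := by
      rw [map_add, _root_.map_smul, smul_eq_mul]
      intro h0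
      apply hr
      simp only [Set.mem_compl_iff, Set.mem_singleton_iff]
      field_simp
      linarith
    exact mul_left_cancel₀ hne (h (x₀ + r • e))
  have := congrFun hEq 0
  simpa [hF, hG] using this

end Aux

lemma aux_swap_prod {ι : Type*} [DecidableEq ι] {M : Type*} [CommMonoid M] {a j₀ : ι}
    {t : Finset ι} (hat : a ∉ t) (hj : j₀ ∈ insert a t) (F : ι → M) :
    ∏ i ∈ t, F (Equiv.swap a j₀ i) = ∏ i ∈ (insert a t).erase j₀, F i := by
  rcases mem_insert.1 hj with rfl | hjt
  · simp [Finset.erase_insert hat]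
  · have haj : a ≠ j₀ := fun h => hat (h ▸ hjt)
    have himg : t.image (Equiv.swap a j₀) = (insert a t).erase j₀ := by
      rw [Finset.erase_insert_of_ne haj]
      nth_rewrite 1 [← Finset.insert_erase hjt]
      rw [Finset.image_insert, Equiv.swap_apply_right]
      congr 1
      rw [Finset.image_congr (g := id), Finset.image_id]
      intro x hx
      simp only [mem_coe, mem_erase] at hx
      exact Equiv.swap_apply_of_ne_of_ne (fun h => hat (h ▸ hx.2)) hx.1
    rw [← himg, Finset.prod_image]
    intro x _ y _ h
    exact (Equiv.swap a j₀).injective h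

variable {X : Type*} [AddCommGroup X] [Module ℝ X]

lemma aux_factor {ι : Type*} [DecidableEq ι] (s : Finset ι) :
    ∀ (ℓ m : ι → X →ₗ[ℝ] ℝ) (K : ℝ), K ≠ 0 → (∀ i ∈ s, ℓ i ≠ 0) →
    (∀ x : X, (∏ i ∈ s, ℓ i x) = K * ∏ i ∈ s, m i x) →
    ∃ (τ : Equiv.Perm ι) (c : ι → ℝ), (∀ i ∉ s, τ i = i) ∧
      ((∏ i ∈ s, c i) * K = 1) ∧ (∀ i ∈ s, m i = c i • ℓ (τ i)) := by
  induction s using Finset.induction_on with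
  | empty =>
    intro ℓ m K hK _ heq
    have hK1 : K = 1 := by simpa using (heq 0).symm
    exact ⟨1, fun _ => 1, by simp, by simp [hK1], by simp⟩
  | @insert a t hat ih =>
    intro ℓ m K hK hℓ heq
    have hmne : ∀ i ∈ insert a t, m i ≠ 0 := by
      intro i hi hmi0
      obtain ⟨x, hx⟩ := aux_exists_forall_ne_zero (insert a t) ℓ hℓ
      have h0 : ∏ j ∈ insert a t, ℓ j x ≠ 0 := prod_ne_zero_iff.2 fun j hj => hx j hj
      rw [heq x] at h0
      exact h0 (by rw [prod_eq_zero hi (by simp [hmi0])]; ring)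
    have hℓa : ℓ a ≠ 0 := hℓ a (mem_insert_self a t)
    have hja : ∃ j₀ ∈ insert a t, ∃ c : ℝ, m j₀ = c • ℓ a := by
      by_contra hcon
      push_neg at hcon
      obtain ⟨x, hx0, hxne⟩ := aux_exists_ker_forall_ne_zero (insert a t) (ℓ a) m
        (fun i hi => by
          intro ⟨c, hc⟩
          exact hcon i hi c hc)
      have h1 := heq x
      rw [prod_insert hat, hx0, zero_mul] at h1
      have h2 : K * ∏ i ∈ insert a t, m i x ≠ 0 :=
        mul_ne_zero hK (prod_ne_zero_iff.2 fun j hj => hxne j hj)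
      exact h2 h1.symm
    obtain ⟨j₀, hj₀, c, hc⟩ := hja
    have hcne : c ≠ 0 := by
      intro h0
      exact hmne j₀ hj₀ (by rw [hc, h0, zero_smul])
    have key : ∀ x, (1:ℝ) * ∏ i ∈ t, ℓ i x
        = (K * c) * ∏ i ∈ t, m (Equiv.swap a j₀ i) x := by
      apply aux_cancel t t (ℓ a) hℓa ℓ (fun i => m (Equiv.swap a j₀ i)) 1 (K * c)
      intro x
      have h1 := heq x
      rw [prod_insert hat] at h1
      rw [← Finset.mul_prod_erase _ _ hj₀] at h1
      have h2 : ∏ i ∈ t, m (Equiv.swap a j₀ i) x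
          = ∏ i ∈ (insert a t).erase j₀, m i x :=
        aux_swap_prod hat hj₀ (fun i => m i x)
      rw [h2]
      rw [hc] at h1
      simp only [LinearMap.smul_apply, smul_eq_mul] at h1
      ring_nf
      ring_nf at h1
      linarith [h1]
    obtain ⟨τ', c', hτ'fix, hprod', hm'⟩ := ih ℓ (fun i => m (Equiv.swap a j₀ i)) (K * c)
      (mul_ne_zero hK hcne) (fun i hi => hℓ i (mem_insert_of_mem hi))
      (fun x => by simpa using key x)
    classical
    refine ⟨(Equiv.swap a j₀).trans τ',
      fun i => if i = j₀ then c else c' (Equiv.swap a j₀ i), ?_, ?_, ?_⟩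
    · intro i hi
      have hia : i ≠ a := fun h => hi (h ▸ mem_insert_self a t)
      have hit : i ∉ t := fun h => hi (mem_insert_of_mem h)
      have hij : i ≠ j₀ := fun h => hi (h ▸ hj₀)
      simp [Equiv.trans_apply, Equiv.swap_apply_of_ne_of_ne hia hij, hτ'fix i hit]
    · rw [← Finset.mul_prod_erase _ _ hj₀]
      have h3 : ∏ i ∈ (insert a t).erase j₀,
          (if i = j₀ then c else c' (Equiv.swap a j₀ i))
          = ∏ i ∈ (insert a t).erase j₀, c' (Equiv.swap a j₀ i) := by
        apply Finset.prod_congr rfl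
        intro i hi
        rw [if_neg (Finset.ne_of_mem_erase hi)]
      have h4 : ∏ i ∈ (insert a t).erase j₀, c' (Equiv.swap a j₀ i)
          = ∏ i ∈ t, c' i := by
        rw [← aux_swap_prod hat hj₀ (fun i => c' (Equiv.swap a j₀ i))]
        apply Finset.prod_congr rfl
        intro i _
        rw [Equiv.swap_apply_self]
      rw [h3, h4, if_pos rfl]
      calc c * (∏ i ∈ t, c' i) * K = (∏ i ∈ t, c' i) * (K * c) := by ring
        _ = 1 := hprod'
    · intro i hi
      by_cases hij : i = j₀
      · subst hij
        beta_reduce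
        rw [if_pos rfl]
        have : τ' a = a := hτ'fix a hat
        simp only [Equiv.trans_apply, Equiv.swap_apply_right, this]
        exact hc
      · beta_reduce
        rw [if_neg hij]
        have hmem : Equiv.swap a j₀ i ∈ t := by
          rcases mem_insert.1 hi with rfl | hit
          · have : j₀ ∈ t := by
              rcases mem_insert.1 hj₀ with rfl | h
              · exact absurd rfl hij
              · exact h
            rw [Equiv.swap_apply_left]
            exact this
          · have hia : i ≠ a := fun h => hat (h ▸ hit)
            rw [Equiv.swap_apply_of_ne_of_ne hia hij]
            exact hit
        have := hm' (Equiv.swap a j₀ i) hmem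
        simp only [Equiv.swap_apply_self] at this
        simpa [Equiv.trans_apply] using this

section Closed

variable (d p : ℕ) (g : Fin d → Fin p) (n : Fin p → ℕ)

lemma zero_mem_rankOneSet (hd : 1 ≤ d) : (0 : TensorSpace d p g n) ∈ rankOneSet d p g n := by
  refine ⟨fun _ _ => 0, fun idx => ?_⟩
  rw [Finset.prod_eq_zero (Finset.mem_univ (⟨0, hd⟩ : Fin d))]
  · rfl
  · rfl

lemma rankOneSet_eq (hd : 1 ≤ d) : rankOneSet d p g n =
    ⋂ (i : Fin d) (X : ∀ i : Fin d, Fin (n (g i))) (Y : ∀ i : Fin d, Fin (n (g i))),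
      {S : TensorSpace d p g n |
        S (Function.update X i (Y i)) * S (Function.update Y i (X i)) = S X * S Y} := by
  classical
  apply Set.Subset.antisymm
  · rintro S ⟨w, hw⟩
    simp only [Set.mem_iInter, Set.mem_setOf_eq]
    intro i X Y
    have key : ∀ (Z : ∀ i : Fin d, Fin (n (g i))) (b : Fin (n (g i))),
        S (Function.update Z i b) = w i b * ∏ j ∈ univ.erase i, w j (Z j) := by
      intro Z b
      rw [hw, ← Finset.mul_prod_erase univ _ (mem_univ i), Function.update_self]
      congr 1
      apply Finset.prod_congr rfl
      intro j hj
      rw [Function.update_of_ne (Finset.ne_of_mem_erase hj)]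
    have hSX : S X = w i (X i) * ∏ j ∈ univ.erase i, w j (X j) := by
      have := key X (X i)
      rwa [Function.update_eq_self] at this
    have hSY : S Y = w i (Y i) * ∏ j ∈ univ.erase i, w j (Y j) := by
      have := key Y (Y i)
      rwa [Function.update_eq_self] at this
    rw [key X (Y i), key Y (X i), hSX, hSY]
    ring
  · intro S hS
    simp only [Set.mem_iInter, Set.mem_setOf_eq] at hS
    by_cases hS0 : S = 0
    · rw [hS0]; exact zero_mem_rankOneSet d p g n hd
    · have hex : ∃ idx, S idx ≠ 0 := by
        by_contra hcon
        push_neg at hcon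
        exact hS0 (by ext i; simpa using hcon i)
      obtain ⟨I, hI⟩ := hex
      set q := S I with hqdef
      have tel : ∀ (idx : ∀ i : Fin d, Fin (n (g i))) (s : Finset (Fin d)),
          S (s.piecewise idx I) * q ^ s.card
            = q * ∏ i ∈ s, S (Function.update I i (idx i)) := by
        intro idx s
        induction s using Finset.induction_on with
        | empty => rw [Finset.piecewise_empty]; simp; rfl
        | @insert a t hat ih =>
          have hminor := hS a (t.piecewise idx I) (Function.update I a (idx a))
          rw [Function.update_self] at hminor
          have hXa : (t.piecewise idx I) a = I a := Finset.piecewise_eq_of_notMem _ _ _ hat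
          rw [hXa, Function.update_idem, Function.update_eq_self] at hminor
          rw [Finset.piecewise_insert, Finset.card_insert_of_notMem hat, pow_succ,
            Finset.prod_insert hat]
          calc S (Function.update (t.piecewise idx I) a (idx a)) * (q ^ t.card * q)
              = (S (Function.update (t.piecewise idx I) a (idx a)) * q) * q ^ t.card := by ring
            _ = (S (t.piecewise idx I) * S (Function.update I a (idx a))) * q ^ t.card := by
                rw [hminor]
            _ = S (Function.update I a (idx a)) * (S (t.piecewise idx I) * q ^ t.card) := by ring
            _ = S (Function.update I a (idx a))
                * (q * ∏ i ∈ t, S (Function.update I i (idx i))) := by rw [ih]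
            _ = q * (S (Function.update I a (idx a))
                * ∏ i ∈ t, S (Function.update I i (idx i))) := by ring
      set i₀ : Fin d := ⟨0, hd⟩ with hi₀
      refine ⟨Function.update (fun i (b : Fin (n (g i))) => S (Function.update I i b)) i₀
        (fun b => S (Function.update I i₀ b) / q ^ (d - 1)), fun idx => ?_⟩
      have htel := tel idx univ
      rw [Finset.piecewise_univ, Finset.card_univ, Fintype.card_fin] at htel
      rw [← Finset.mul_prod_erase univ _ (mem_univ i₀)] at htel
      rw [← Finset.mul_prod_erase univ _ (mem_univ i₀), Function.update_self]
      have herase : ∏ j ∈ univ.erase i₀,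
          (Function.update (fun i (b : Fin (n (g i))) => S (Function.update I i b)) i₀
            (fun b => S (Function.update I i₀ b) / q ^ (d - 1))) j (idx j)
          = ∏ j ∈ univ.erase i₀, S (Function.update I j (idx j)) := by
        apply Finset.prod_congr rfl
        intro j hj
        rw [Function.update_of_ne (Finset.ne_of_mem_erase hj)]
      rw [herase]
      have hqd : q ^ d = q ^ (d - 1) * q := by
        conv_lhs => rw [show d = (d - 1) + 1 from (Nat.succ_pred_eq_of_pos hd).symm]
        rw [pow_succ]
      rw [hqd] at htel
      have hqne : q ^ (d - 1) ≠ 0 := pow_ne_zero _ hI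
      rw [div_mul_eq_mul_div, eq_div_iff hqne]
      apply mul_right_cancel₀ hI
      linear_combination htel

lemma rankOneSet_closed (hd : 1 ≤ d) : IsClosed (rankOneSet d p g n) := by
  rw [rankOneSet_eq d p g n hd]
  refine isClosed_iInter fun i => isClosed_iInter fun X => isClosed_iInter fun Y => ?_
  apply isClosed_eq
  · exact Continuous.mul ((EuclideanSpace.proj _).continuous) ((EuclideanSpace.proj _).continuous)
  · exact Continuous.mul ((EuclideanSpace.proj _).continuous) ((EuclideanSpace.proj _).continuous)

end Closed

section AuxDecl

/-- the linear functional `x ↦ ∑ b, v b * x k b` on `∀ k, Fin (n k) → ℝ`. -/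
def auxFun {p : ℕ} (n : Fin p → ℕ) (k : Fin p) (v : Fin (n k) → ℝ) :
    ((∀ k : Fin p, Fin (n k) → ℝ) →ₗ[ℝ] ℝ) where
  toFun x := ∑ b, v b * x k b
  map_add' x y := by
    simp only [Pi.add_apply, mul_add]
    rw [Finset.sum_add_distrib]
  map_smul' c x := by
    simp only [Pi.smul_apply, smul_eq_mul, RingHom.id_apply]
    rw [Finset.mul_sum]
    exact Finset.sum_congr rfl fun b _ => by ring

lemma auxFun_delta {p : ℕ} (n : Fin p → ℕ) (k k' : Fin p) (v : Fin (n k') → ℝ)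
    (b : Fin (n k)) :
    auxFun n k' v (fun k'' b'' => if k'' = k ∧ (b'' : ℕ) = (b : ℕ) then 1 else 0)
    = if h : k' = k then v (Fin.cast (congrArg n h).symm b) else 0 := by
  classical
  show (∑ b'', v b'' * if k' = k ∧ (b'' : ℕ) = (b : ℕ) then 1 else 0) = _
  by_cases h : k' = k
  · subst h
    rw [dif_pos rfl]
    have hcast : Fin.cast (congrArg n rfl).symm b = b := rfl
    rw [hcast]
    simp only [true_and, Fin.val_eq_val, mul_ite, mul_one, mul_zero]
    simp
  · rw [dif_neg h]
    simp [h]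

lemma auxFun_ne_zero {p : ℕ} (n : Fin p → ℕ) (k : Fin p) (v : Fin (n k) → ℝ) (hv : v ≠ 0) :
    auxFun n k v ≠ 0 := by
  obtain ⟨b, hb⟩ := Function.ne_iff.1 hv
  intro h0
  apply hb
  have := congrFun (congrArg DFunLike.coe h0)
    (fun (k'' : Fin p) (b'' : Fin (n k'')) => if k'' = k ∧ (b'' : ℕ) = (b : ℕ) then 1 else 0)
  rw [auxFun_delta, dif_pos rfl] at this
  simp only [Pi.zero_apply]
  simpa using this

lemma auxFun_eq_zero {p : ℕ} (n : Fin p → ℕ) (k : Fin p) (v : Fin (n k) → ℝ)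
    (hv : ∀ x, auxFun n k v x = 0) : v = 0 := by
  ext b
  have := hv (fun (k'' : Fin p) (b'' : Fin (n k'')) => if k'' = k ∧ (b'' : ℕ) = (b : ℕ) then 1 else 0)
  rw [auxFun_delta, dif_pos rfl] at this
  simpa using this

end AuxDecl

section Bridge

variable {d p : ℕ} {g : Fin d → Fin p} {n : Fin p → ℕ}

lemma cast_apply_eq {p : ℕ} (n : Fin p → ℕ) (x : ∀ k : Fin p, Fin (n k) → ℝ)
    {k k' : Fin p} (h : k' = k) (b : Fin (n k')) :
    x k (Fin.cast (congrArg n h) b) = x k' b := by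
  subst h; rfl

/-- the test tensor `idx ↦ ∏ j, x (g j) (idx j)`. -/
def testTensor (d : ℕ) (g : Fin d → Fin p) (n : Fin p → ℕ)
    (x : ∀ k : Fin p, Fin (n k) → ℝ) : TensorSpace d p g n :=
  WithLp.toLp 2 (fun idx => ∏ j, x (g j) (idx j))

lemma testTensor_mem (x : ∀ k : Fin p, Fin (n k) → ℝ) :
    testTensor d g n x ∈ Somega d p g n := by
  intro σ hσ idx
  show (∏ j, x (g j) (Fin.cast (congrArg n (hσ j)) (idx (σ j)))) = ∏ j, x (g j) (idx j)
  rw [Finset.prod_congr rfl fun j _ => cast_apply_eq n x (hσ j) (idx (σ j))]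
  exact Equiv.prod_comp σ (fun j => x (g j) (idx j))

lemma inner_testTensor (u : ∀ j : Fin d, Fin (n (g j)) → ℝ) (S : TensorSpace d p g n)
    (hS : ∀ idx, S idx = ∏ j, u j (idx j)) (x : ∀ k : Fin p, Fin (n k) → ℝ) :
    ⟪S, testTensor d g n x⟫ = ∏ j, auxFun n (g j) (u j) x := by
  classical
  have h1 : ⟪S, testTensor d g n x⟫
      = ∑ idx : (∀ j : Fin d, Fin (n (g j))), S idx * testTensor d g n x idx := by
    rw [PiLp.inner_apply]
    exact Finset.sum_congr rfl fun idx _ => by simp [RCLike.inner_apply]; ring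
  rw [h1]
  have h2 : ∀ idx : (∀ j : Fin d, Fin (n (g j))),
      S idx * testTensor d g n x idx = ∏ j, (u j (idx j) * x (g j) (idx j)) := by
    intro idx
    rw [hS idx]
    show (∏ j, u j (idx j)) * (∏ j, x (g j) (idx j)) = _
    rw [← Finset.prod_mul_distrib]
  rw [Finset.sum_congr rfl fun idx _ => h2 idx]
  have h3 : ∀ j : Fin d, auxFun n (g j) (u j) x = ∑ b, u j b * x (g j) b := fun j => rfl
  rw [Finset.prod_congr rfl fun j _ => h3 j]
  rw [Finset.prod_univ_sum]
  rw [← Fintype.piFinset_univ]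

end Bridge

set_option maxHeartbeats 1000000
set_option synthInstance.maxHeartbeats 400000

section Analysis

variable {d p : ℕ} {g : Fin d → Fin p} {n : Fin p → ℕ}

lemma nearest_inner_eq (C : Set (TensorSpace d p g n))
    (T : Somega d p g n)
    (hT : DifferentiableAt ℝ
      (fun x : Somega d p g n => Metric.infDist (x : TensorSpace d p g n) C) T)
    (P S : TensorSpace d p g n) (hPC : P ∈ C) (hSC : S ∈ C)
    (hPd : dist (T : TensorSpace d p g n) P = Metric.infDist (T : TensorSpace d p g n) C)
    (hSd : dist (T : TensorSpace d p g n) S = Metric.infDist (T : TensorSpace d p g n) C)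
    (h : Somega d p g n) :
    ⟪S, (h : TensorSpace d p g n)⟫ = ⟪P, (h : TensorSpace d p g n)⟫ := by
  set f2 : Somega d p g n → ℝ := fun x => (Metric.infDist (x : TensorSpace d p g n) C)^2 with hf2def
  have hf2 : DifferentiableAt ℝ f2 T := hT.pow 2
  have hdiffQ : ∀ Q : TensorSpace d p g n, DifferentiableAt ℝ
      (fun x : Somega d p g n => (⟪(x : TensorSpace d p g n) - Q, (x : TensorSpace d p g n) - Q⟫ : ℝ)) T := by
    intro Q
    apply DifferentiableAt.inner
    · exact ((Somega d p g n).subtypeL.differentiable.differentiableAt).sub_const Q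
    · exact ((Somega d p g n).subtypeL.differentiable.differentiableAt).sub_const Q
  have hgen : ∀ Q : TensorSpace d p g n, Q ∈ C →
      dist (T : TensorSpace d p g n) Q = Metric.infDist (T : TensorSpace d p g n) C →
      fderiv ℝ (fun x : Somega d p g n =>
        (⟪(x : TensorSpace d p g n) - Q, (x : TensorSpace d p g n) - Q⟫ : ℝ)) T
        = fderiv ℝ f2 T := by
    intro Q hQC hQd
    set gQ : Somega d p g n → ℝ := fun x =>
      (⟪(x : TensorSpace d p g n) - Q, (x : TensorSpace d p g n) - Q⟫ : ℝ) with hgQdef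
    have hgQval : ∀ x : Somega d p g n, gQ x = (dist (x : TensorSpace d p g n) Q)^2 := by
      intro x
      rw [hgQdef]
      simp only []
      rw [real_inner_self_eq_norm_sq, dist_eq_norm]
    have hle : ∀ x : Somega d p g n, f2 x ≤ gQ x := by
      intro x
      rw [hgQval x, hf2def]
      exact pow_le_pow_left₀ Metric.infDist_nonneg (Metric.infDist_le_dist_of_mem hQC) 2
    have heqT : f2 T = gQ T := by
      rw [hgQval T, hf2def]
      simp only []
      rw [hQd]
    have hmin : IsLocalMin (fun x : Somega d p g n => gQ x - f2 x) T := by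
      apply Filter.Eventually.of_forall
      intro x
      show gQ T - f2 T ≤ gQ x - f2 x
      have h0 : gQ T - f2 T = 0 := by rw [heqT, sub_self]
      rw [h0]
      exact sub_nonneg.2 (hle x)
    have hfd0 := hmin.fderiv_eq_zero
    rw [fderiv_fun_sub (hdiffQ Q) hf2] at hfd0
    exact sub_eq_zero.1 hfd0
  have hP := hgen P hPC hPd
  have hS := hgen S hSC hSd
  set L : Somega d p g n →L[ℝ] ℝ := (innerSL ℝ ((2:ℝ) • (S - P))).comp (Somega d p g n).subtypeL with hLdef
  have hLf : HasFDerivAt (fun x : Somega d p g n =>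
      (⟪(x : TensorSpace d p g n) - P, (x : TensorSpace d p g n) - P⟫ : ℝ)
      - ⟪(x : TensorSpace d p g n) - S, (x : TensorSpace d p g n) - S⟫) L T := by
    have hfun : (fun x : Somega d p g n =>
        (⟪(x : TensorSpace d p g n) - P, (x : TensorSpace d p g n) - P⟫ : ℝ)
        - ⟪(x : TensorSpace d p g n) - S, (x : TensorSpace d p g n) - S⟫)
        = fun x : Somega d p g n => L x + ((⟪P, P⟫ : ℝ) - ⟪S, S⟫) := by
      funext x
      simp only [hLdef, ContinuousLinearMap.comp_apply, innerSL_apply_apply,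
        Submodule.coe_subtypeL', Submodule.subtype_apply]
      rw [inner_sub_left, inner_sub_left, inner_sub_right, inner_sub_right,
        inner_sub_right, inner_sub_right, real_inner_smul_left, inner_sub_left]
      rw [real_inner_comm P (x : TensorSpace d p g n),
        real_inner_comm S (x : TensorSpace d p g n)]
      ring
    rw [hfun]
    exact (L.hasFDerivAt).add_const _
  have hL0 : L = 0 := by
    have h1 := hLf.fderiv
    rw [fderiv_fun_sub (hdiffQ P) (hdiffQ S), hP, hS, sub_self] at h1
    exact h1.symm
  have h2 : L h = 0 := by rw [hL0]; rfl
  rw [hLdef] at h2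
  simp only [ContinuousLinearMap.comp_apply, innerSL_apply_apply,
    Submodule.coe_subtypeL', Submodule.subtype_apply] at h2
  rw [real_inner_smul_left, inner_sub_left] at h2
  have h3 : (⟪S, (h : TensorSpace d p g n)⟫ : ℝ) - ⟪P, (h : TensorSpace d p g n)⟫ = 0 := by
    linarith
  linarith

end Analysis

/-- For almost every `ω`-partially-symmetric tensor `T` there is a tuple `y`
such that `⊗ⱼ yⱼ` is a best rank one approximation of `T` and every best rank
one approximation of `T` is obtained from `y` by a permutation `σ` of the
factors with `g ∘ σ = g`. -/
theorem ae_best_rank_one_approx_up_to_symmetry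
    (d p : ℕ) (hd : 1 ≤ d) (hp : 1 ≤ p) (g : Fin d → Fin p)
    (hg : Function.Surjective g) (n : Fin p → ℕ) (hn : ∀ k, 1 ≤ n k)
    (μ : Measure (Somega d p g n)) [μ.IsAddHaarMeasure] :
    ∀ᵐ (T : Somega d p g n) ∂μ, ∃ y : ∀ j : Fin d, Fin (n (g j)) → ℝ,
      (∃ Y ∈ rankOneSet d p g n, (∀ idx, Y idx = ∏ j, y j (idx j)) ∧
        dist (T : TensorSpace d p g n) Y =
          Metric.infDist (T : TensorSpace d p g n) (rankOneSet d p g n)) ∧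
      ∀ S ∈ rankOneSet d p g n,
        dist (T : TensorSpace d p g n) S =
            Metric.infDist (T : TensorSpace d p g n) (rankOneSet d p g n) →
          ∃ σ : Equiv.Perm (Fin d), ∃ hσ : ∀ j, g (σ j) = g j,
            ∀ idx : ∀ i : Fin d, Fin (n (g i)),
              S idx = ∏ j, y (σ j) (Fin.cast (congrArg n (hσ j)).symm (idx j)) := by
  classical
  have hCcl : IsClosed (rankOneSet d p g n) := rankOneSet_closed d p g n hd
  have hCne : (rankOneSet d p g n).Nonempty := ⟨0, zero_mem_rankOneSet d p g n hd⟩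
  have hlip : LipschitzWith 1
      (fun x : Somega d p g n =>
        Metric.infDist (x : TensorSpace d p g n) (rankOneSet d p g n)) := by
    have h1 : LipschitzWith 1
        (fun y : TensorSpace d p g n => Metric.infDist y (rankOneSet d p g n)) :=
      Metric.lipschitz_infDist_pt _
    have h2 : LipschitzWith 1
        (fun x : Somega d p g n => (x : TensorSpace d p g n)) := by
      apply LipschitzWith.of_dist_le_mul
      intro x y
      rw [Subtype.dist_eq, NNReal.coe_one, one_mul]
    have h3 := h1.comp h2
    rw [mul_one] at h3
    exact h3
  filter_upwards [hlip.ae_differentiableAt] with T hT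
  obtain ⟨P, hPC, hPd⟩ := hCcl.exists_infDist_eq_dist hCne (T : TensorSpace d p g n)
  obtain ⟨yP, hyP⟩ := id hPC
  refine ⟨yP, ⟨P, hPC, hyP, hPd.symm⟩, ?_⟩
  intro S hSC hSd
  have hinner : ∀ h : Somega d p g n,
      (⟪S, (h : TensorSpace d p g n)⟫ : ℝ) = ⟪P, (h : TensorSpace d p g n)⟫ :=
    fun h => nearest_inner_eq _ T hT P S hPC hSC hPd.symm hSd h
  obtain ⟨wS, hwS⟩ := id hSC
  have hkey : ∀ x : ∀ k : Fin p, Fin (n k) → ℝ,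
      ∏ j, auxFun n (g j) (yP j) x = ∏ j, auxFun n (g j) (wS j) x := by
    intro x
    have h1 := hinner ⟨testTensor d g n x, testTensor_mem x⟩
    calc ∏ j, auxFun n (g j) (yP j) x = ⟪P, testTensor d g n x⟫ :=
          (inner_testTensor yP P hyP x).symm
      _ = ⟪S, testTensor d g n x⟫ := h1.symm
      _ = ∏ j, auxFun n (g j) (wS j) x := inner_testTensor wS S hwS x
  by_cases hy : ∀ j, yP j ≠ 0
  · -- non-degenerate case
    obtain ⟨τ, c, -, hprod, hmc⟩ := aux_factor Finset.univ
      (fun j => auxFun n (g j) (yP j)) (fun j => auxFun n (g j) (wS j)) 1 one_ne_zero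
      (fun j _ => auxFun_ne_zero n (g j) (yP j) (hy j))
      (fun x => by rw [one_mul]; exact hkey x)
    have hprod1 : ∏ j, c j = 1 := by simpa using hprod
    have hcne : ∀ j, c j ≠ 0 := by
      intro j hc0
      rw [Finset.prod_eq_zero (Finset.mem_univ j) hc0] at hprod1
      exact zero_ne_one hprod1
    have hσ : ∀ j, g (τ j) = g j := by
      intro j
      by_contra hne
      have hwj : wS j = 0 := by
        funext b
        have hthis := congrFun (congrArg DFunLike.coe (hmc j (Finset.mem_univ j)))
          (fun (k'' : Fin p) (b'' : Fin (n k'')) =>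
            if k'' = g j ∧ (b'' : ℕ) = (b : ℕ) then 1 else 0)
        simp only [LinearMap.smul_apply, smul_eq_mul] at hthis
        rw [auxFun_delta, auxFun_delta, dif_pos rfl, dif_neg hne, mul_zero] at hthis
        show wS j b = 0
        exact hthis
      have hm0 : auxFun n (g j) (wS j) = 0 := by
        apply LinearMap.ext
        intro x
        show (∑ b, wS j b * x (g j) b) = 0
        simp [hwj]
      have hsm := hmc j (Finset.mem_univ j)
      rw [hm0] at hsm
      rcases smul_eq_zero.1 hsm.symm with hczero | h0
      · exact hcne j hczero
      · exact auxFun_ne_zero n (g (τ j)) (yP (τ j)) (hy (τ j)) h0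
    refine ⟨τ, hσ, fun idx => ?_⟩
    have hterm : ∀ j, wS j (idx j)
        = c j * yP (τ j) (Fin.cast (congrArg n (hσ j)).symm (idx j)) := by
      intro j
      have hthis := congrFun (congrArg DFunLike.coe (hmc j (Finset.mem_univ j)))
        (fun (k'' : Fin p) (b'' : Fin (n k'')) =>
          if k'' = g j ∧ (b'' : ℕ) = ((idx j) : ℕ) then 1 else 0)
      simp only [LinearMap.smul_apply, smul_eq_mul] at hthis
      rw [auxFun_delta, auxFun_delta, dif_pos rfl, dif_pos (hσ j)] at hthis
      exact hthis
    rw [hwS idx, Finset.prod_congr rfl fun j _ => hterm j, Finset.prod_mul_distrib,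
      hprod1, one_mul]
  · -- degenerate case : some factor of `P` vanishes
    push_neg at hy
    obtain ⟨j0, hj0⟩ := hy
    have hPzero : ∀ x : ∀ k : Fin p, Fin (n k) → ℝ,
        ∏ j, auxFun n (g j) (yP j) x = 0 := by
      intro x
      apply Finset.prod_eq_zero (Finset.mem_univ j0)
      show (∑ b, yP j0 b * x (g j0) b) = 0
      rw [hj0]
      simp
    obtain ⟨j1, hj1⟩ : ∃ j1, wS j1 = 0 := by
      by_contra hcon
      push_neg at hcon
      obtain ⟨x, hx⟩ := aux_exists_forall_ne_zero Finset.univ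
        (fun j => auxFun n (g j) (wS j))
        (fun j _ => auxFun_ne_zero n (g j) (wS j) (hcon j))
      have hcontr := hkey x
      rw [hPzero x] at hcontr
      exact Finset.prod_ne_zero_iff.2 (fun j hj => hx j hj) hcontr.symm
    refine ⟨1, fun j => rfl, fun idx => ?_⟩
    have hS0 : S idx = 0 := by
      rw [hwS idx]
      apply Finset.prod_eq_zero (Finset.mem_univ j1)
      rw [hj1]
      rfl
    rw [hS0]
    refine (Finset.prod_eq_zero (Finset.mem_univ j0) ?_).symm
    show yP j0 _ = 0
    rw [hj0]
    rfl
end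

section
/- Let d ≥ 1, p ≥ 1, let g : Fin d → Fin p be a surjective grouping map encoding a partition ω of d, and let n : Fin p → ℕ with n k ≥ 1. Let S^ω be the subspace of ω-partially-symmetric tensors T : (Π i : Fin d, Fin (n (g i))) → ℝ, and let C be the set of all rank-one tensors (including zero) in the full tensor space. Then: (i) every T ∈ S^ω has a best rank one approximation (a nearest point in C in Hilbert–Schmidt norm) which is ω-symmetric, i.e., of the form idx ↦ ε · ∏_i (z (g i))(idx i) for some ε ∈ {+1, −1} and z k ∈ ℝ^{n k}; and (ii) for almost every T ∈ S^ω (with respect to Haar/Lebesgue measure on S^ω) the best rank one approximation of T is unique and is ω-symmetric. -/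
open MeasureTheory
open scoped RealInnerProductSpace

/-- The set of `ω`-symmetric rank one tensors `idx ↦ ε ∏ᵢ (z (g i))(idxᵢ)`,
`ε = ±1`. -/
def omegaSymRankOne (d p : ℕ) (g : Fin d → Fin p) (n : Fin p → ℕ) :
    Set (TensorSpace d p g n) :=
  {S | ∃ ε : ℝ, (ε = 1 ∨ ε = -1) ∧ ∃ z : ∀ k, Fin (n k) → ℝ,
    ∀ idx, S idx = ε * ∏ i, z (g i) (idx i)}


namespace BR1A

variable {d p : ℕ} {g : Fin d → Fin p} {n : Fin p → ℕ}

/-- tensor space -/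
abbrev E (d p : ℕ) (g : Fin d → Fin p) (n : Fin p → ℕ) :=
  EuclideanSpace ℝ (∀ i : Fin d, Fin (n (g i)))

abbrev Tup (d p : ℕ) (g : Fin d → Fin p) (n : Fin p → ℕ) := ∀ i : Fin d, Fin (n (g i)) → ℝ

/-- the rank one tensor associated to a tuple of vectors -/
def tns (w : Tup d p g n) : E d p g n := WithLp.toLp 2 (fun idx => ∏ i, w i (idx i))

lemma tns_apply (w : Tup d p g n) (idx) : tns w idx = ∏ i, w i (idx i) := rfl

/-- the multilinear functional `⟨T, w₁ ⊗ ⋯ ⊗ w_d⟩` -/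
def Fm (T : E d p g n) (w : Tup d p g n) : ℝ := ∑ idx, T idx * ∏ i, w i (idx i)

/-- `Fm` squared -/
def Gm (T : E d p g n) (w : Tup d p g n) : ℝ := (Fm T w) ^ 2

/-- the set of tuples of unit vectors -/
def UP (d p : ℕ) (g : Fin d → Fin p) (n : Fin p → ℕ) : Set (Tup d p g n) :=
  {w | ∀ i, ∑ a, (w i a) ^ 2 = 1}

lemma inner_tns (T : E d p g n) (w : Tup d p g n) : (inner ℝ T (tns w) : ℝ) = Fm T w := by
  simp [PiLp.inner_apply, RCLike.inner_apply, Fm, tns, mul_comm]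

lemma fin_cast_self {m : ℕ} (h : m = m) (β : Fin m) : Fin.cast h β = β := by
  apply Fin.ext; simp

lemma sum_sq_cast {m m' : ℕ} (h : m = m') (v : Fin m' → ℝ) :
    ∑ a : Fin m, (v (Fin.cast h a)) ^ 2 = ∑ a : Fin m', (v a) ^ 2 :=
  Fintype.sum_equiv (finCongr h) _ _ (fun _ => rfl)

lemma norm_tns_sq (w : Tup d p g n) : ‖tns (g := g) (n := n) w‖ ^ 2 = ∏ i, ∑ a, (w i a) ^ 2 := by
  rw [← real_inner_self_eq_norm_sq]
  have h1 : (inner ℝ (tns (g:=g) (n:=n) w) (tns w) : ℝ)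
      = ∑ idx : (∀ i : Fin d, Fin (n (g i))), ∏ i, (w i (idx i))^2 := by
    rw [PiLp.inner_apply]; simp only [RCLike.inner_apply, conj_trivial]
    simp [tns, ← Finset.prod_mul_distrib, sq]
  rw [h1, Finset.prod_univ_sum (fun _ => Finset.univ) (fun i a => (w i a) ^ 2),
    Fintype.piFinset_univ]

lemma norm_tns_one {w : Tup d p g n} (hw : w ∈ UP d p g n) :
    ‖tns (g := g) (n := n) w‖ ^ 2 = 1 := by
  rw [norm_tns_sq]; exact Finset.prod_eq_one (fun i _ => hw i)

/-- distance formula to a scaled unit rank-one tensor -/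
lemma dist_sq_smul_tns (T : E d p g n) {w : Tup d p g n} (hw : w ∈ UP d p g n) (c : ℝ) :
    ‖T - c • tns w‖ ^ 2 = ‖T‖ ^ 2 - 2 * c * Fm T w + c ^ 2 := by
  rw [norm_sub_sq_real, real_inner_smul_right, inner_tns, norm_smul]
  rw [mul_pow, norm_tns_one hw]
  simp [abs_sq]; ring
  
section Split

lemma prod_split {M : Type*} [CommMonoid M] {d : ℕ} {i j : Fin d} (hij : i ≠ j) (f : Fin d → M) :
    ∏ k, f k = f i * (f j * ∏ k ∈ (Finset.univ.erase i).erase j, f k) := by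
  rw [Finset.mul_prod_erase _ _ (Finset.mem_erase.2 ⟨hij.symm, Finset.mem_univ j⟩),
    Finset.mul_prod_erase _ _ (Finset.mem_univ i)]

lemma sum_split {M : Type*} [AddCommMonoid M] {d : ℕ} {i j : Fin d} (hij : i ≠ j) (f : Fin d → M) :
    ∑ k, f k = f i + (f j + ∑ k ∈ (Finset.univ.erase i).erase j, f k) := by
  rw [Finset.add_sum_erase _ _ (Finset.mem_erase.2 ⟨hij.symm, Finset.mem_univ j⟩),
    Finset.add_sum_erase _ _ (Finset.mem_univ i)]

end Split

section Upd2

variable (w : Tup d p g n) (i j : Fin d) (hg : g i = g j)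

/-- update slots `i` and `j` with vectors `a`, `b` (transported) -/
def upd2 (a b : Fin (n (g i)) → ℝ) : Tup d p g n :=
  Function.update (Function.update w i a) j (fun β => b (Fin.cast (congrArg n hg).symm β))

variable {w i j hg}

lemma upd2_apply_i (hij : i ≠ j) (a b : Fin (n (g i)) → ℝ) : upd2 w i j hg a b i = a := by
  rw [upd2, Function.update_of_ne hij, Function.update_self]

lemma upd2_apply_j (a b : Fin (n (g i)) → ℝ) :
    upd2 w i j hg a b j = fun β => b (Fin.cast (congrArg n hg).symm β) := by
  rw [upd2, Function.update_self]

lemma upd2_apply_other {k : Fin d} (hki : k ≠ i) (hkj : k ≠ j) (a b : Fin (n (g i)) → ℝ) :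
    upd2 w i j hg a b k = w k := by
  rw [upd2, Function.update_of_ne hkj, Function.update_of_ne hki]

lemma upd2_self (hij : i ≠ j) :
    upd2 w i j hg (w i) (fun β => w j (Fin.cast (congrArg n hg) β)) = w := by
  funext k
  by_cases hki : k = i
  · subst hki; rw [upd2_apply_i hij]
  · by_cases hkj : k = j
    · subst hkj
      rw [upd2_apply_j]
      funext β
      have hc : Fin.cast (congrArg n hg) (Fin.cast (congrArg n hg).symm β) = β := by
        apply Fin.ext; simp
      rw [hc]
    · rw [upd2_apply_other hki hkj]

lemma upd2_mem_UP (hij : i ≠ j) (hw : w ∈ UP d p g n) {a b : Fin (n (g i)) → ℝ}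
    (ha : ∑ α, (a α) ^ 2 = 1) (hb : ∑ α, (b α) ^ 2 = 1) :
    upd2 w i j hg a b ∈ UP d p g n := by
  intro k
  by_cases hki : k = i
  · subst hki; rw [upd2_apply_i hij]; exact ha
  · by_cases hkj : k = j
    · subst hkj; rw [upd2_apply_j]
      rw [sum_sq_cast (congrArg n hg).symm b]; exact hb
    · rw [upd2_apply_other hki hkj]; exact hw k

/-- rest-product over remaining slots -/
def Rrest (w : Tup d p g n) (i j : Fin d) (idx : ∀ i : Fin d, Fin (n (g i))) : ℝ :=
  ∏ k ∈ (Finset.univ.erase i).erase j, w k (idx k)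

lemma Fm_upd2 (T : E d p g n) (hij : i ≠ j) (a b : Fin (n (g i)) → ℝ) :
    Fm T (upd2 w i j hg a b) =
      ∑ idx, (T idx * Rrest w i j idx) * (a (idx i) * b (Fin.cast (congrArg n hg).symm (idx j))) := by
  unfold Fm
  refine Finset.sum_congr rfl (fun idx _ => ?_)
  rw [prod_split hij]
  rw [upd2_apply_i hij, upd2_apply_j]
  have : ∏ k ∈ (Finset.univ.erase i).erase j, upd2 w i j hg a b k (idx k) = Rrest w i j idx := by
    refine Finset.prod_congr rfl (fun k hk => ?_)
    simp only [Finset.mem_erase] at hk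
    rw [upd2_apply_other hk.2.1 hk.1]
  rw [this]; ring

end Upd2

section Linform

lemma linform {m : ℕ} {ι : Type*} [Fintype ι] [DecidableEq ι] (Cc : ι → ℝ) (ψ : ι → Fin m) :
    ∀ b : Fin m → ℝ, ∑ idx, Cc idx * b (ψ idx)
      = ∑ β, (∑ idx, if ψ idx = β then Cc idx else 0) * b β := by
  intro b
  symm
  calc ∑ β, (∑ idx, if ψ idx = β then Cc idx else 0) * b β
      = ∑ β, ∑ idx, (if ψ idx = β then Cc idx * b β else 0) := by
        refine Finset.sum_congr rfl fun β _ => ?_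
        rw [Finset.sum_mul]
        exact Finset.sum_congr rfl fun idx _ => by rw [ite_mul, zero_mul]
    _ = ∑ idx, ∑ β, (if ψ idx = β then Cc idx * b β else 0) := Finset.sum_comm
    _ = ∑ idx, Cc idx * b (ψ idx) := Finset.sum_congr rfl fun idx _ => by
        rw [Finset.sum_ite_eq]; simp

lemma riesz {m : ℕ} (r y : Fin m → ℝ) (θ : ℝ) (hy : ∑ β, (y β)^2 = 1)
    (hval : ∑ β, r β * y β = θ)
    (hbound : ∀ b : Fin m → ℝ, (∑ β, (b β)^2 = 1) → (∑ β, r β * b β)^2 ≤ θ^2) :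
    ∀ β, r β = θ * y β := by
  set Q := ∑ β, (r β)^2 with hQdef
  have hQ0 : 0 ≤ Q := Finset.sum_nonneg (fun β _ => sq_nonneg _)
  have hCS : θ^2 ≤ Q := by
    calc θ^2 = (∑ β, r β * y β)^2 := by rw [hval]
    _ ≤ (∑ β, (r β)^2) * (∑ β, (y β)^2) := Finset.sum_mul_sq_le_sq_mul_sq _ _ _
    _ = Q := by rw [hy, mul_one]
  have hQθ : Q ≤ θ^2 := by
    rcases eq_or_lt_of_le hQ0 with h0 | hpos
    · rw [← h0]; exact sq_nonneg _
    · set R := Real.sqrt Q with hR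
      have hRpos : 0 < R := Real.sqrt_pos.2 hpos
      have hRsq : R^2 = Q := Real.sq_sqrt hQ0
      have h1 : ∑ β, (r β / R)^2 = 1 := by
        simp only [div_pow]
        rw [← Finset.sum_div, ← hQdef, hRsq, div_self hpos.ne']
      have h2 : ∑ β, r β * (r β / R) = Q / R := by
        rw [Finset.sum_div]
        exact Finset.sum_congr rfl fun β _ => by ring
      have h3 := hbound _ h1
      rw [h2] at h3
      have h4 : (Q / R)^2 = Q := by
        rw [div_pow, hRsq, sq, mul_div_assoc, div_self hpos.ne', mul_one]
      linarith [h3, h4]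
  have hQeq : Q = θ^2 := le_antisymm hQθ hCS
  have hzero : ∑ β, (r β - θ * y β)^2 = 0 := by
    have : ∑ β, (r β - θ * y β)^2 = Q - 2*θ*(∑ β, r β * y β) + θ^2 * (∑ β, (y β)^2) := by
      rw [hQdef, Finset.mul_sum, Finset.mul_sum, ← Finset.sum_sub_distrib, ← Finset.sum_add_distrib]
      exact Finset.sum_congr rfl (fun β _ => by ring)
    rw [this, hval, hy, hQeq]; ring
  intro β
  have := (Finset.sum_eq_zero_iff_of_nonneg (fun β _ => sq_nonneg (r β - θ * y β))).1 hzero β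
    (Finset.mem_univ β)
  have := sq_eq_zero_iff.1 this
  linarith

end Linform

section Symm

lemma val_app_congr (idx : ∀ k : Fin d, Fin (n (g k))) {k k' : Fin d} (h : k = k') :
    ((idx k : Fin (n (g k))) : ℕ) = ((idx k') : ℕ) := by subst h; rfl

lemma Bb_symm (T : E d p g n) (hT : T ∈ Somega d p g n) (w : Tup d p g n)
    {i j : Fin d} (hij : i ≠ j) (hg : g i = g j) (a b : Fin (n (g i)) → ℝ) :
    Fm T (upd2 w i j hg a b) = Fm T (upd2 w i j hg b a) := by
  classical
  set σ : Equiv.Perm (Fin d) := Equiv.swap i j with hσdef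
  have hσg : ∀ k, g (σ k) = g k := by
    intro k
    rcases eq_or_ne k i with rfl | hki
    · simp [hσdef, hg.symm]
    rcases eq_or_ne k j with rfl | hkj
    · simp [hσdef, hg]
    · simp [hσdef, Equiv.swap_apply_of_ne_of_ne hki hkj]
  set Θ : (∀ k : Fin d, Fin (n (g k))) → (∀ k : Fin d, Fin (n (g k))) :=
    fun idx k => Fin.cast (congrArg n (hσg k)) (idx (σ k)) with hΘdef
  have hΘΘ : Function.Involutive Θ := by
    intro idx; funext k
    apply Fin.ext
    simp only [hΘdef, Fin.coe_cast]
    exact val_app_congr idx (by simp [hσdef])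
  rw [Fm_upd2 T hij a b, Fm_upd2 T hij b a]
  refine Fintype.sum_bijective Θ hΘΘ.bijective _ _ (fun idx => ?_)
  have h1 : T (Θ idx) = T idx := hT σ hσg idx
  have h2 : Rrest w i j (Θ idx) = Rrest w i j idx := by
    refine Finset.prod_congr rfl fun k hk => ?_
    simp only [Finset.mem_erase] at hk
    congr 1
    apply Fin.ext
    simp only [hΘdef, Fin.coe_cast]
    exact val_app_congr idx (by simp [hσdef, Equiv.swap_apply_of_ne_of_ne hk.2.1 hk.1])
  have h3 : b ((Θ idx) i) = b (Fin.cast (congrArg n hg).symm (idx j)) := by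
    congr 1
    apply Fin.ext
    simp only [hΘdef, Fin.coe_cast]
    exact val_app_congr idx (by simp [hσdef])
  have h4 : a (Fin.cast (congrArg n hg).symm ((Θ idx) j)) = a (idx i) := by
    congr 1
    apply Fin.ext
    simp only [hΘdef, Fin.coe_cast]
    exact val_app_congr idx (by simp [hσdef])
  rw [h1, h2, h3, h4]
  ring

/-- representation of the bilinear slot functional as a linear form -/
lemma slot_rep (T : E d p g n) (w : Tup d p g n)
    {i j : Fin d} (hij : i ≠ j) (hg : g i = g j) (a : Fin (n (g i)) → ℝ) :
    ∃ r : Fin (n (g i)) → ℝ, ∀ b, Fm T (upd2 w i j hg a b) = ∑ β, r β * b β := by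
  classical
  refine ⟨fun β => ∑ idx, if Fin.cast (congrArg n hg).symm (idx j) = β
    then (T idx * Rrest w i j idx) * a (idx i) else 0, fun b => ?_⟩
  rw [Fm_upd2 T hij a b]
  rw [show (∑ idx, (T idx * Rrest w i j idx) * (a (idx i) * b (Fin.cast (congrArg n hg).symm (idx j))))
    = ∑ idx, ((T idx * Rrest w i j idx) * a (idx i)) * b (Fin.cast (congrArg n hg).symm (idx j)) from
    Finset.sum_congr rfl fun idx _ => by ring]
  exact linform _ _ b

lemma Bb_add₁ (T : E d p g n) (w : Tup d p g n) {i j : Fin d} (hij : i ≠ j) (hg : g i = g j)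
    (a₁ a₂ b : Fin (n (g i)) → ℝ) :
    Fm T (upd2 w i j hg (a₁ + a₂) b) = Fm T (upd2 w i j hg a₁ b) + Fm T (upd2 w i j hg a₂ b) := by
  rw [Fm_upd2 T hij, Fm_upd2 T hij, Fm_upd2 T hij, ← Finset.sum_add_distrib]
  exact Finset.sum_congr rfl fun idx _ => by simp [Pi.add_apply]; ring

lemma Bb_smul (T : E d p g n) (w : Tup d p g n) {i j : Fin d} (hij : i ≠ j) (hg : g i = g j)
    (t₁ t₂ : ℝ) (a b : Fin (n (g i)) → ℝ) :
    Fm T (upd2 w i j hg (fun β => t₁ * a β) (fun β => t₂ * b β))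
      = t₁ * t₂ * Fm T (upd2 w i j hg a b) := by
  rw [Fm_upd2 T hij, Fm_upd2 T hij, Finset.mul_sum]
  exact Finset.sum_congr rfl fun idx _ => by ring

end Symm

section Phi

/-- group-aggregated vectors -/
def wv (w : Tup d p g n) (k : Fin p) (β : Fin (n k)) : ℝ :=
  ∑ i, if h : g i = k then w i (Fin.cast (congrArg n h).symm β) else 0

/-- the symmetrization potential -/
def Φf (w : Tup d p g n) : ℝ := ∑ k, ∑ β, (wv w k β) ^ 2

lemma wv_upd2_ne {w : Tup d p g n} {i j : Fin d} (hij : i ≠ j) (hg : g i = g j)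
    (a b : Fin (n (g i)) → ℝ) {k : Fin p} (hk : k ≠ g i) (β : Fin (n k)) :
    wv (upd2 w i j hg a b) k β = wv w k β := by
  unfold wv
  refine Finset.sum_congr rfl fun i' _ => ?_
  by_cases h' : g i' = k
  · have hi : i' ≠ i := fun he => hk (by rw [← he, h'])
    have hj : i' ≠ j := fun he => hk (by subst he; exact (hg.trans h').symm)
    rw [dif_pos h', dif_pos h', upd2_apply_other hi hj]
  · rw [dif_neg h', dif_neg h']

lemma wv_upd2_eq {w : Tup d p g n} {i j : Fin d} (hij : i ≠ j) (hg : g i = g j)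
    (a : Fin (n (g i)) → ℝ) (β : Fin (n (g i))) :
    wv (upd2 w i j hg a a) (g i) β
      = wv w (g i) β + (2 * a β - w i β - w j (Fin.cast (congrArg n hg) β)) := by
  unfold wv
  rw [sum_split hij, sum_split hij]
  have hgi : g i = g i := rfl
  have hgj : g j = g i := hg.symm
  have e1 : (if h : g i = g i then upd2 w i j hg a a i (Fin.cast (congrArg n h).symm β) else 0)
      = a β := by
    rw [dif_pos hgi, upd2_apply_i hij]
    exact congrArg a (by apply Fin.ext; simp)
  have e2 : (if h : g j = g i then upd2 w i j hg a a j (Fin.cast (congrArg n h).symm β) else 0)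
      = a β := by
    rw [dif_pos hgj, upd2_apply_j]
    exact congrArg a (by apply Fin.ext; simp)
  have e3 : (if h : g i = g i then w i (Fin.cast (congrArg n h).symm β) else 0) = w i β := by
    rw [dif_pos hgi]
    exact congrArg (w i) (by apply Fin.ext; simp)
  have e4 : (if h : g j = g i then w j (Fin.cast (congrArg n h).symm β) else 0)
      = w j (Fin.cast (congrArg n hg) β) := by
    rw [dif_pos hgj]
  have e5 : ∑ k ∈ (Finset.univ.erase i).erase j,
      (if h : g k = g i then upd2 w i j hg a a k (Fin.cast (congrArg n h).symm β) else 0)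
      = ∑ k ∈ (Finset.univ.erase i).erase j,
      (if h : g k = g i then w k (Fin.cast (congrArg n h).symm β) else 0) := by
    refine Finset.sum_congr rfl fun k hk => ?_
    simp only [Finset.mem_erase] at hk
    by_cases h' : g k = g i
    · rw [dif_pos h', dif_pos h', upd2_apply_other hk.2.1 hk.1]
    · rw [dif_neg h', dif_neg h']
  rw [e1, e2, e3, e4, e5]
  ring

lemma Phi_upd2 {w : Tup d p g n} {i j : Fin d} (hij : i ≠ j) (hg : g i = g j)
    (a : Fin (n (g i)) → ℝ) :
    Φf (upd2 w i j hg a a)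
      = Φf w + ((∑ β, (wv w (g i) β + (2 * a β - w i β - w j (Fin.cast (congrArg n hg) β))) ^ 2)
        - ∑ β, (wv w (g i) β) ^ 2) := by
  unfold Φf
  rw [← Finset.add_sum_erase _ _ (Finset.mem_univ (g i)),
    ← Finset.add_sum_erase _ (fun k => ∑ β, (wv w k β)^2) (Finset.mem_univ (g i))]
  have h1 : ∑ k ∈ Finset.univ.erase (g i), ∑ β, (wv (upd2 w i j hg a a) k β)^2
      = ∑ k ∈ Finset.univ.erase (g i), ∑ β, (wv w k β)^2 := by
    refine Finset.sum_congr rfl fun k hk => Finset.sum_congr rfl fun β _ => ?_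
    rw [wv_upd2_ne hij hg a a (Finset.mem_erase.1 hk).1]
  have h2 : ∑ β, (wv (upd2 w i j hg a a) (g i) β)^2
      = ∑ β, (wv w (g i) β + (2 * a β - w i β - w j (Fin.cast (congrArg n hg) β)))^2 := by
    refine Finset.sum_congr rfl fun β _ => ?_
    rw [wv_upd2_eq hij hg a β]
  rw [h1, h2]
  ring

lemma sum_add_sq {m : ℕ} (V δ : Fin m → ℝ) :
    ∑ β, (V β + δ β)^2 = ∑ β, (V β)^2 + 2 * ∑ β, V β * δ β + ∑ β, (δ β)^2 := by
  rw [Finset.mul_sum, ← Finset.sum_add_distrib, ← Finset.sum_add_distrib]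
  exact Finset.sum_congr rfl fun β _ => by ring

end Phi

section Pairwise

lemma pairwise_pm (T : E d p g n) (hT : T ∈ Somega d p g n) {w : Tup d p g n}
    (hw : w ∈ UP d p g n)
    (hmaxG : ∀ v ∈ UP d p g n, Gm T v ≤ Gm T w)
    (hmaxΦ : ∀ v ∈ UP d p g n, Gm T v = Gm T w → Φf v ≤ Φf w)
    {i j : Fin d} (hij : i ≠ j) (hg : g i = g j) :
    (∀ β, w i β = w j (Fin.cast (congrArg n hg) β)) ∨
    (∀ β, w i β = - w j (Fin.cast (congrArg n hg) β)) := by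
  classical
  by_contra hcon
  push_neg at hcon
  obtain ⟨h1, h2⟩ := hcon
  obtain ⟨β₁, hβ₁⟩ := h1
  obtain ⟨β₂, hβ₂⟩ := h2
  set x : Fin (n (g i)) → ℝ := w i with hxdef
  set yv : Fin (n (g i)) → ℝ := fun β => w j (Fin.cast (congrArg n hg) β) with hyvdef
  have hxd : ∀ β, w i β = x β := fun _ => rfl
  have hyd : ∀ β, w j (Fin.cast (congrArg n hg) β) = yv β := fun _ => rfl
  have hx : ∑ β, (x β)^2 = 1 := hw i
  have hy : ∑ β, (yv β)^2 = 1 := by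
    rw [hyvdef]
    exact (sum_sq_cast (congrArg n hg) (w j)).trans (hw j)
  set c : ℝ := ∑ β, x β * yv β with hcdef
  have hsum_sub : ∑ β, (x β - yv β)^2 = 2 - 2*c := by
    have h : ∀ β ∈ Finset.univ, (x β - yv β)^2 = (x β)^2 + (yv β)^2 - 2*(x β * yv β) :=
      fun β _ => by ring
    rw [Finset.sum_congr rfl h, Finset.sum_sub_distrib, Finset.sum_add_distrib, hx, hy,
      ← Finset.mul_sum, ← hcdef]
    ring
  have hsum_add : ∑ β, (x β + yv β)^2 = 2 + 2*c := by
    have h : ∀ β ∈ Finset.univ, (x β + yv β)^2 = (x β)^2 + (yv β)^2 + 2*(x β * yv β) :=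
      fun β _ => by ring
    rw [Finset.sum_congr rfl h, Finset.sum_add_distrib, Finset.sum_add_distrib, hx, hy,
      ← Finset.mul_sum, ← hcdef]
    ring
  have hc_lt : c < 1 := by
    have hpos : 0 < ∑ β, (x β - yv β)^2 :=
      Finset.sum_pos' (fun β _ => sq_nonneg _)
        ⟨β₁, Finset.mem_univ _,
          lt_of_le_of_ne (sq_nonneg _) (Ne.symm (pow_ne_zero 2 (sub_ne_zero.2 hβ₁)))⟩
    rw [hsum_sub] at hpos; linarith
  have hc_gt : -1 < c := by
    have hβ₂' : x β₂ + yv β₂ ≠ 0 := fun h => hβ₂ (show x β₂ = -(yv β₂) by linarith)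
    have hpos : 0 < ∑ β, (x β + yv β)^2 :=
      Finset.sum_pos' (fun β _ => sq_nonneg _)
        ⟨β₂, Finset.mem_univ _,
          lt_of_le_of_ne (sq_nonneg _) (Ne.symm (pow_ne_zero 2 hβ₂'))⟩
    rw [hsum_add] at hpos; linarith
  set θ : ℝ := Fm T w with hθdef
  have hBxy : Fm T (upd2 w i j hg x yv) = θ := by rw [upd2_self hij]
  have hbound : ∀ a b : Fin (n (g i)) → ℝ, (∑ β, (a β)^2 = 1) → (∑ β, (b β)^2 = 1) →
      (Fm T (upd2 w i j hg a b))^2 ≤ θ^2 := fun a b ha hb =>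
    hmaxG _ (upd2_mem_UP hij hw ha hb)
  obtain ⟨rx, hrx⟩ := slot_rep T w hij hg x
  have hrxθ : ∀ β, rx β = θ * yv β := by
    refine riesz rx yv θ hy ?_ ?_
    · rw [← hrx yv]; exact hBxy
    · intro b hb; rw [← hrx b]; exact hbound x b hx hb
  have hBx : ∀ b, Fm T (upd2 w i j hg x b) = θ * ∑ β, yv β * b β := by
    intro b
    rw [hrx b, Finset.mul_sum]
    exact Finset.sum_congr rfl fun β _ => by rw [hrxθ β]; ring
  obtain ⟨ry, hry⟩ := slot_rep T w hij hg yv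
  have hryθ : ∀ β, ry β = θ * x β := by
    refine riesz ry x θ hx ?_ ?_
    · rw [← hry x, Bb_symm T hT w hij hg yv x]; exact hBxy
    · intro b hb; rw [← hry b]; exact hbound yv b hy hb
  have hBy : ∀ b, Fm T (upd2 w i j hg yv b) = θ * ∑ β, x β * b β := by
    intro b
    rw [hry b, Finset.mul_sum]
    exact Finset.sum_congr rfl fun β _ => by rw [hryθ β]; ring
  -- value on combinations
  have hBsum : ∀ t₁ t₂ : ℝ,
      Fm T (upd2 w i j hg (fun β => t₁ * x β + t₂ * yv β) (fun β => t₁ * x β + t₂ * yv β))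
        = θ * (t₁^2*c + 2*t₁*t₂ + t₂^2*c) := by
    intro t₁ t₂
    have e1 : (fun β => t₁ * x β + t₂ * yv β)
        = (fun β => t₁ * x β) + (fun β => t₂ * yv β) := rfl
    rw [e1, Bb_add₁ T w hij hg]
    have e2 : Fm T (upd2 w i j hg (fun β => t₁ * x β) ((fun β => t₁ * x β) + fun β => t₂ * yv β))
        = t₁ * Fm T (upd2 w i j hg x ((fun β => t₁ * x β) + fun β => t₂ * yv β)) := by
      have := Bb_smul T w hij hg t₁ 1 x ((fun β => t₁ * x β) + fun β => t₂ * yv β)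
      simp only [one_mul, mul_one] at this; exact this
    have e3 : Fm T (upd2 w i j hg (fun β => t₂ * yv β) ((fun β => t₁ * x β) + fun β => t₂ * yv β))
        = t₂ * Fm T (upd2 w i j hg yv ((fun β => t₁ * x β) + fun β => t₂ * yv β)) := by
      have := Bb_smul T w hij hg t₂ 1 yv ((fun β => t₁ * x β) + fun β => t₂ * yv β)
      simp only [one_mul, mul_one] at this; exact this
    rw [e2, e3, hBx, hBy]
    have e4 : ∑ β, yv β * ((fun β => t₁ * x β) + fun β => t₂ * yv β) β = t₁ * c + t₂ := by
      have h : ∀ β ∈ Finset.univ, yv β * ((fun β => t₁ * x β) + fun β => t₂ * yv β) β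
          = t₁ * (x β * yv β) + t₂ * (yv β)^2 := fun β _ => by
        simp [Pi.add_apply]; ring
      rw [Finset.sum_congr rfl h, Finset.sum_add_distrib, ← Finset.mul_sum, ← Finset.mul_sum,
        ← hcdef, hy]
      ring
    have e5 : ∑ β, x β * ((fun β => t₁ * x β) + fun β => t₂ * yv β) β = t₁ + t₂ * c := by
      have h : ∀ β ∈ Finset.univ, x β * ((fun β => t₁ * x β) + fun β => t₂ * yv β) β
          = t₁ * (x β)^2 + t₂ * (x β * yv β) := fun β _ => by
        simp [Pi.add_apply]; ring
      rw [Finset.sum_congr rfl h, Finset.sum_add_distrib, ← Finset.mul_sum, ← Finset.mul_sum,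
        ← hcdef, hx]
      ring
    rw [e4, e5]
    ring
  -- scalars
  set V : Fin (n (g i)) → ℝ := wv w (g i) with hVdef
  set s : ℝ := ∑ β, V β * x β with hsdef
  set t : ℝ := ∑ β, V β * yv β with htdef
  -- generic contradiction builder
  have main : ∀ a : Fin (n (g i)) → ℝ, (∑ β, (a β)^2 = 1) →
      (Fm T (upd2 w i j hg a a))^2 = θ^2 →
      2 * (2 * (∑ β, V β * a β) - s - t)
        + (4 - 4 * (∑ β, a β * (x β + yv β)) + (2 + 2*c)) ≤ 0 := by
    intro a ha hGa
    have hup : upd2 w i j hg a a ∈ UP d p g n := upd2_mem_UP hij hw ha ha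
    have hle := hmaxΦ _ hup (by rw [Gm, Gm, hGa])
    rw [Phi_upd2 hij hg a] at hle
    have hXY : ∑ β, (V β + (2 * a β - w i β - w j (Fin.cast (congrArg n hg) β)))^2
        - ∑ β, (V β)^2 ≤ 0 := by linarith
    have hXY' : ∑ β, (V β + (2 * a β - x β - yv β))^2 - ∑ β, (V β)^2 ≤ 0 := hXY
    have hexpand := sum_add_sq V (fun β => 2 * a β - x β - yv β)
    have hVδ : ∑ β, V β * (2 * a β - x β - yv β) = 2 * (∑ β, V β * a β) - s - t := by
      have h : ∀ β ∈ Finset.univ, V β * (2 * a β - x β - yv β)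
          = 2 * (V β * a β) - (V β * x β + V β * yv β) := fun β _ => by ring
      rw [Finset.sum_congr rfl h, Finset.sum_sub_distrib, Finset.sum_add_distrib,
        ← Finset.mul_sum, ← hsdef, ← htdef]
      ring
    have hδδ : ∑ β, (2 * a β - x β - yv β)^2
        = 4 * (∑ β, (a β)^2) - 4 * (∑ β, a β * (x β + yv β)) + ∑ β, (x β + yv β)^2 := by
      have h : ∀ β ∈ Finset.univ, (2 * a β - x β - yv β)^2
          = 4 * (a β)^2 - 4 * (a β * (x β + yv β)) + (x β + yv β)^2 := fun β _ => by ring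
      rw [Finset.sum_congr rfl h, Finset.sum_add_distrib, Finset.sum_sub_distrib,
        ← Finset.mul_sum, ← Finset.mul_sum]
    linarith [hexpand, hVδ, hδδ, hXY', ha, hsum_add]
  -- now the case analysis
  clear_value x yv c θ V s t
  clear hrx hry hrxθ hryθ hBx hBy hbound hBxy hmaxG hmaxΦ hβ₁ hβ₂ hxd hyd hxdef hyvdef hcdef
    hθdef hVdef hw hT
  by_cases hcase : s + t > 2 + 2*c
  · -- use the normalized sum (x + yv)
    have hq0 : (0:ℝ) < 2 + 2*c := by linarith
    set e : ℝ := Real.sqrt (2 + 2*c) with hedef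
    have he0 : 0 < e := Real.sqrt_pos.2 hq0
    have he2 : e^2 = 2 + 2*c := Real.sq_sqrt hq0.le
    have helt : e < 2 := by nlinarith
    set a : Fin (n (g i)) → ℝ := fun β => (x β + yv β)/e with hadef
    have haform : upd2 w i j hg a a
        = upd2 w i j hg (fun β => (1/e) * x β + (1/e) * yv β)
            (fun β => (1/e) * x β + (1/e) * yv β) := by
      have : a = fun β => (1/e) * x β + (1/e) * yv β := by
        funext β; simp only [hadef]; ring
      rw [this]
    have ha1 : ∑ β, (a β)^2 = 1 := by
      have h : ∀ β ∈ Finset.univ, (a β)^2 = (x β + yv β)^2 * (1/e^2) := fun β _ => by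
        simp only [hadef]; ring
      rw [Finset.sum_congr rfl h, ← Finset.sum_mul, hsum_add, he2]
      rw [mul_one_div, div_self hq0.ne']
    have hval : Fm T (upd2 w i j hg a a) = θ := by
      rw [haform, hBsum]
      have hcoef : (1/e)^2*c + 2*(1/e)*(1/e) + (1/e)^2*c = 1 := by
        have hh : (1/e)^2*c + 2*(1/e)*(1/e) + (1/e)^2*c = (2*c+2) * (1/e)^2 := by ring
        rw [hh, div_pow, one_pow, he2, mul_one_div, div_eq_one_iff_eq hq0.ne']
        ring
      rw [hcoef, mul_one]
    have hkey := main a ha1 (by rw [hval])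
    have hDa : e * (∑ β, V β * a β) = s + t := by
      rw [Finset.mul_sum]
      have h : ∀ β ∈ Finset.univ, e * (V β * a β) = V β * x β + V β * yv β := fun β _ => by
        simp only [hadef]; field_simp
      rw [Finset.sum_congr rfl h, Finset.sum_add_distrib, ← hsdef, ← htdef]
    have hSxy : (∑ β, a β * (x β + yv β)) = e := by
      have h : e * (∑ β, a β * (x β + yv β)) = e * e := by
        rw [Finset.mul_sum]
        have h2 : ∀ β ∈ Finset.univ, e * (a β * (x β + yv β)) = (x β + yv β)^2 :=
          fun β _ => by simp only [hadef]; rw [div_mul_eq_mul_div, mul_div_assoc']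
                        rw [mul_comm e _, mul_div_assoc, div_self he0.ne', mul_one]; ring
        rw [Finset.sum_congr rfl h2, hsum_add, ← he2]; ring
      exact mul_left_cancel₀ he0.ne' h
    set Da : ℝ := ∑ β, V β * a β with hDadef
    rw [hSxy] at hkey
    have hu0 : (0:ℝ) < s + t := by linarith
    have h2e : (0:ℝ) < 2 - e := by linarith
    have hA : 4*Da - 2*(s+t) + (2-e)^2 ≤ 0 := by nlinarith [hkey, he2]
    have hmul := mul_le_mul_of_nonneg_left hA he0.le
    nlinarith [hmul, hDa, mul_pos hu0 h2e, mul_nonneg he0.le (sq_nonneg (2 - e))]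
  · push_neg at hcase
    have hq0 : (0:ℝ) < 2 - 2*c := by linarith
    set e : ℝ := Real.sqrt (2 - 2*c) with hedef
    have he0 : 0 < e := Real.sqrt_pos.2 hq0
    have he2 : e^2 = 2 - 2*c := Real.sq_sqrt hq0.le
    set η : ℝ := if 0 ≤ ∑ β, V β * ((x β - yv β)/e) then 1 else -1 with hηdef
    have hη2 : η^2 = 1 := by rw [hηdef]; split_ifs <;> norm_num
    set a : Fin (n (g i)) → ℝ := fun β => η * ((x β - yv β)/e) with hadef
    have haform : upd2 w i j hg a a
        = upd2 w i j hg (fun β => (η/e) * x β + (-(η/e)) * yv β)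
            (fun β => (η/e) * x β + (-(η/e)) * yv β) := by
      have : a = fun β => (η/e) * x β + (-(η/e)) * yv β := by
        funext β; simp only [hadef]; ring
      rw [this]
    have ha1 : ∑ β, (a β)^2 = 1 := by
      have h : ∀ β ∈ Finset.univ, (a β)^2 = (x β - yv β)^2 * (1/e^2) := fun β _ => by
        have h' : (a β)^2 = η^2 * ((x β - yv β)^2 * (1/e^2)) := by
          simp only [hadef]; ring
        rw [h', hη2, one_mul]
      rw [Finset.sum_congr rfl h, ← Finset.sum_mul, hsum_sub, he2]
      rw [mul_one_div, div_self hq0.ne']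
    have hval : Fm T (upd2 w i j hg a a) = -θ := by
      rw [haform, hBsum]
      have hcoef : (η/e)^2*c + 2*(η/e)*(-(η/e)) + (-(η/e))^2*c = -1 := by
        have hh : (η/e)^2*c + 2*(η/e)*(-(η/e)) + (-(η/e))^2*c
            = (2*c - 2) * (η^2 * (1/e)^2) := by ring
        rw [hh, hη2, one_mul, div_pow, one_pow, he2, mul_one_div,
          div_eq_iff (by linarith : (2:ℝ) - 2*c ≠ 0)]
        ring
      rw [hcoef]; ring
    have hkey := main a ha1 (by rw [hval]; ring)
    have hSxy0 : ∑ β, a β * (x β + yv β) = 0 := by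
      have h : e * (∑ β, a β * (x β + yv β)) = η * ∑ β, ((x β)^2 - (yv β)^2) := by
        rw [Finset.mul_sum, Finset.mul_sum]
        refine Finset.sum_congr rfl fun β _ => ?_
        simp only [hadef]; field_simp; ring
      rw [Finset.sum_sub_distrib, hx, hy, sub_self, mul_zero] at h
      exact (mul_eq_zero.1 h).resolve_left he0.ne'
    have hηD : 0 ≤ ∑ β, V β * a β := by
      have h : ∑ β, V β * a β = η * ∑ β, V β * ((x β - yv β)/e) := by
        rw [Finset.mul_sum]
        exact Finset.sum_congr rfl fun β _ => by simp only [hadef]; ring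
      rw [h, hηdef]
      split_ifs with hsign
      · simpa using hsign
      · push_neg at hsign
        have : (0:ℝ) ≤ -(∑ β, V β * ((x β - yv β)/e)) := by linarith
        simpa using this
    rw [hSxy0] at hkey
    linarith [hkey, hηD, hcase, hc_lt]

end Pairwise

section Exists

lemma UP_compact : IsCompact (UP d p g n) := by
  have he : UP d p g n = Set.pi Set.univ (fun i => {v : Fin (n (g i)) → ℝ | ∑ a, (v a)^2 = 1}) := by
    ext w; simp [UP, Set.mem_pi]
  rw [he]
  apply isCompact_univ_pi
  intro i
  apply IsCompact.of_isClosed_subset (isCompact_closedBall 0 1)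
  · exact isClosed_eq (by continuity) continuous_const
  · intro v hv
    simp only [Set.mem_setOf_eq] at hv
    rw [Metric.mem_closedBall, dist_zero_right]
    rw [pi_norm_le_iff_of_nonneg zero_le_one]
    intro a
    have h1 : (v a)^2 ≤ 1 := by
      rw [← hv]
      exact Finset.single_le_sum (f := fun a => (v a)^2) (fun _ _ => sq_nonneg _)
        (Finset.mem_univ a)
    rw [Real.norm_eq_abs]
    nlinarith [abs_nonneg (v a), sq_abs (v a)]

lemma UP_nonempty (hn : ∀ k, 1 ≤ n k) : (UP d p g n).Nonempty := by
  refine ⟨fun i a => if a = ⟨0, hn (g i)⟩ then 1 else 0, fun i => ?_⟩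
  have h : ∀ a, ((if a = (⟨0, hn (g i)⟩ : Fin (n (g i))) then (1:ℝ) else 0))^2
      = if a = ⟨0, hn (g i)⟩ then 1 else 0 := fun a => by split_ifs <;> norm_num
  rw [Finset.sum_congr rfl (fun a _ => h a), Finset.sum_ite_eq' Finset.univ]
  simp

lemma Fm_continuous (T : E d p g n) : Continuous (Fm T : Tup d p g n → ℝ) := by
  apply continuous_finset_sum
  intro idx _
  exact continuous_const.mul
    (continuous_finset_prod _ fun i _ => (continuous_apply (idx i)).comp (continuous_apply i))

lemma Gm_continuous (T : E d p g n) : Continuous (Gm T : Tup d p g n → ℝ) :=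
  (Fm_continuous T).pow 2

lemma Phi_continuous : Continuous (Φf : Tup d p g n → ℝ) := by
  apply continuous_finset_sum
  intro k _
  apply continuous_finset_sum
  intro β _
  apply Continuous.pow
  apply continuous_finset_sum
  intro i _
  by_cases h : g i = k
  · simp only [dif_pos h]
    exact (continuous_apply _).comp (continuous_apply i)
  · simp only [dif_neg h]
    exact continuous_const

lemma exists_max_pair (hn : ∀ k, 1 ≤ n k) (T : E d p g n) :
    ∃ w ∈ UP d p g n, (∀ v ∈ UP d p g n, Gm T v ≤ Gm T w) ∧
      (∀ v ∈ UP d p g n, Gm T v = Gm T w → Φf v ≤ Φf w) := by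
  obtain ⟨w₀, hw₀, hmax₀⟩ := UP_compact.exists_isMaxOn (UP_nonempty hn)
    (Gm_continuous T).continuousOn
  have hKc : IsCompact (UP d p g n ∩ {v | Gm T v = Gm T w₀}) :=
    UP_compact.inter_right (isClosed_eq (Gm_continuous T) continuous_const)
  have hKne : (UP d p g n ∩ {v | Gm T v = Gm T w₀}).Nonempty := ⟨w₀, hw₀, rfl⟩
  obtain ⟨w, hwK, hmaxΦ⟩ := hKc.exists_isMaxOn hKne Phi_continuous.continuousOn
  refine ⟨w, hwK.1, fun v hv => ?_, fun v hv hGv => hmaxΦ ⟨hv, hGv.trans hwK.2⟩⟩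
  rw [hwK.2]
  exact hmax₀ hv

end Exists

section Membership

lemma tns_mem_rankOne (w : Tup d p g n) : tns w ∈ rankOneSet d p g n := ⟨w, fun _ => rfl⟩

lemma zero_mem_rankOne (hd : 1 ≤ d) : (0 : E d p g n) ∈ rankOneSet d p g n :=
  ⟨fun _ _ => 0, fun idx => (Finset.prod_eq_zero (Finset.mem_univ (⟨0,hd⟩ : Fin d)) rfl).symm⟩

lemma smul_tns_mem (hd : 1 ≤ d) (c : ℝ) (w : Tup d p g n) :
    c • tns w ∈ rankOneSet d p g n := by
  classical
  set i₀ : Fin d := ⟨0, hd⟩ with hi₀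
  refine ⟨Function.update w i₀ (fun a => c * w i₀ a), fun idx => ?_⟩
  rw [PiLp.smul_apply, tns_apply, smul_eq_mul]
  have h : ∏ i ∈ Finset.univ.erase i₀, Function.update w i₀ (fun a => c * w i₀ a) i (idx i)
      = ∏ i ∈ Finset.univ.erase i₀, w i (idx i) :=
    Finset.prod_congr rfl fun i hi => by rw [Function.update_of_ne (Finset.mem_erase.1 hi).1]
  rw [← Finset.mul_prod_erase Finset.univ
      (fun i => Function.update w i₀ (fun a => c * w i₀ a) i (idx i)) (Finset.mem_univ i₀),
    Function.update_self, h,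
    ← Finset.mul_prod_erase Finset.univ (fun i => w i (idx i)) (Finset.mem_univ i₀)]
  ring

lemma tup_app_congr (w : Tup d p g n) {i i' : Fin d} (h : i' = i) (β : Fin (n (g i')))
    (hc : n (g i') = n (g i)) : w i (Fin.cast hc β) = w i' β := by
  subst h
  exact congrArg (w i') (by apply Fin.ext; simp)

lemma sym_tensor_form (hg : Function.Surjective g) (hd : 1 ≤ d)
    {w : Tup d p g n}
    (hpair : ∀ (i j : Fin d), i ≠ j → ∀ hgij : g i = g j,
      (∀ β, w i β = w j (Fin.cast (congrArg n hgij) β)) ∨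
      (∀ β, w i β = - w j (Fin.cast (congrArg n hgij) β)))
    (θ : ℝ) :
    (θ • tns w : E d p g n) ∈ omegaSymRankOne d p g n := by
  classical
  choose isel hisel using hg
  set z₀ : ∀ k, Fin (n k) → ℝ :=
    fun k β => w (isel k) (Fin.cast (congrArg n (hisel k)).symm β) with hz₀
  have hsig : ∀ i, (∀ β, w i β = z₀ (g i) β) ∨ (∀ β, w i β = - z₀ (g i) β) := by
    intro i
    rcases eq_or_ne i (isel (g i)) with he | hne
    · left
      intro β
      exact (tup_app_congr w he β (congrArg n (hisel (g i))).symm).symm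
    · exact hpair i (isel (g i)) hne (hisel (g i)).symm
  set sgn : Fin d → ℝ := fun i => if (∀ β, w i β = z₀ (g i) β) then 1 else -1 with hsgndef
  have hsgn : ∀ i β, w i β = sgn i * z₀ (g i) β := by
    intro i β
    by_cases h : (∀ β, w i β = z₀ (g i) β)
    · rw [hsgndef]; simp only [if_pos h, one_mul]; exact h β
    · have h2 := (hsig i).resolve_left h
      rw [hsgndef]; simp only [if_neg h]
      rw [h2 β]; ring
  have htns : ∀ idx, tns w idx = (∏ i, sgn i) * ∏ i, z₀ (g i) (idx i) := by
    intro idx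
    rw [tns_apply, ← Finset.prod_mul_distrib]
    exact Finset.prod_congr rfl fun i _ => hsgn i (idx i)
  set ρ : ℝ := θ * ∏ i, sgn i with hρdef
  rcases eq_or_ne ρ 0 with hρ | hρ
  · refine ⟨1, Or.inl rfl, fun k β => 0, fun idx => ?_⟩
    rw [PiLp.smul_apply, smul_eq_mul]
    have h0 : ∀ f : Fin d → ℝ, (∀ i, f i = 0) → ∏ i, f i = 0 := fun f hf =>
      Finset.prod_eq_zero (Finset.mem_univ (⟨0,hd⟩ : Fin d)) (hf _)
    calc θ * tns w idx = ρ * ∏ i, z₀ (g i) (idx i) := by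
          rw [htns idx, ← mul_assoc, ← hρdef]
      _ = 0 := by rw [hρ]; ring
      _ = 1 * ∏ _i : Fin d, (0:ℝ) := by rw [h0 _ (fun _ => rfl)]; ring
  · set k₀ : Fin p := g (⟨0, hd⟩ : Fin d) with hk₀
    set ω : ℕ := (Finset.univ.filter (fun i => g i = k₀)).card with hω
    have hω0 : ω ≠ 0 :=
      Finset.card_ne_zero_of_mem (Finset.mem_filter.2 ⟨Finset.mem_univ _, rfl⟩)
    set tscal : ℝ := |ρ| ^ ((ω : ℝ)⁻¹) with htscal
    have htω : tscal ^ ω = |ρ| := by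
      rw [htscal, ← Real.rpow_natCast (|ρ| ^ ((ω : ℝ)⁻¹)) ω, ← Real.rpow_mul (abs_nonneg ρ),
        inv_mul_cancel₀ (Nat.cast_ne_zero.2 hω0), Real.rpow_one]
    refine ⟨if 0 < ρ then 1 else -1, by split_ifs <;> simp,
      fun k β => (if k = k₀ then tscal else 1) * z₀ k β, fun idx => ?_⟩
    rw [PiLp.smul_apply, smul_eq_mul]
    rw [htns idx, ← mul_assoc, ← hρdef]
    rw [Finset.prod_mul_distrib]
    have hpr : (∏ i, if g i = k₀ then tscal else 1) = tscal ^ ω := by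
      rw [Finset.prod_ite, Finset.prod_const, Finset.prod_const, one_pow, mul_one, hω]
    rw [hpr, htω]
    split_ifs with hρ0
    · rw [abs_of_pos hρ0]; ring
    · rw [abs_of_neg (lt_of_le_of_ne (not_lt.1 hρ0) hρ)]; ring

/-- normal form of rank one tensors -/
lemma rankOne_normal_form (hd : 1 ≤ d) {S' : E d p g n} (hS' : S' ∈ rankOneSet d p g n) :
    S' = 0 ∨ ∃ u ∈ UP d p g n, ∃ Λ : ℝ, 0 < Λ ∧ S' = Λ • tns u := by
  classical
  obtain ⟨w', hw'⟩ := hS'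
  by_cases hz : ∃ i, ∑ a, (w' i a)^2 = 0
  · left
    obtain ⟨i, hi⟩ := hz
    have hzero : ∀ a, w' i a = 0 := by
      intro a
      have h := (Finset.sum_eq_zero_iff_of_nonneg (fun a _ => sq_nonneg (w' i a))).1 hi a
        (Finset.mem_univ a)
      exact pow_eq_zero_iff two_ne_zero |>.1 h
    refine PiLp.ext fun idx => ?_
    rw [hw' idx]
    exact Finset.prod_eq_zero (Finset.mem_univ i) (hzero (idx i))
  · right
    push_neg at hz
    have hpos : ∀ i, 0 < ∑ a, (w' i a)^2 := fun i =>
      lt_of_le_of_ne (Finset.sum_nonneg fun a _ => sq_nonneg _) (Ne.symm (hz i))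
    set lam : Fin d → ℝ := fun i => Real.sqrt (∑ a, (w' i a)^2) with hlam
    have hlampos : ∀ i, 0 < lam i := fun i => Real.sqrt_pos.2 (hpos i)
    have hlamsq : ∀ i, (lam i)^2 = ∑ a, (w' i a)^2 := fun i => Real.sq_sqrt (hpos i).le
    refine ⟨fun i a => w' i a / lam i, fun i => ?_, ∏ i, lam i,
      Finset.prod_pos fun i _ => hlampos i, ?_⟩
    · have h : ∀ a ∈ Finset.univ, (w' i a / lam i)^2 = (w' i a)^2 * (1/(lam i)^2) :=
        fun a _ => by ring
      rw [Finset.sum_congr rfl h, ← Finset.sum_mul, hlamsq i]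
      rw [mul_one_div, div_self (hpos i).ne']
    · refine PiLp.ext fun idx => ?_
      rw [hw' idx]
      show _ = (∏ i, lam i) * ∏ i, (w' i (idx i) / lam i)
      rw [← Finset.prod_mul_distrib]
      refine Finset.prod_congr rfl fun i _ => ?_
      rw [mul_div_assoc', mul_comm, mul_div_assoc, div_self (hlampos i).ne', mul_one]

end Membership

section PartI

lemma sq_le_imp_le {a b : ℝ} (h : a^2 ≤ b^2) (ha : 0 ≤ a) (hb : 0 ≤ b) : a ≤ b := by nlinarith

theorem part_i (hd : 1 ≤ d) (hgs : Function.Surjective g) (hn : ∀ k, 1 ≤ n k)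
    (T : E d p g n) (hT : T ∈ Somega d p g n) :
    ∃ S ∈ rankOneSet d p g n,
      dist T S = Metric.infDist T (rankOneSet d p g n) ∧ S ∈ omegaSymRankOne d p g n := by
  obtain ⟨w, hwUP, hmaxG, hmaxΦ⟩ := exists_max_pair hn T
  have hpair : ∀ (i j : Fin d), i ≠ j → ∀ hgij : g i = g j,
      (∀ β, w i β = w j (Fin.cast (congrArg n hgij) β)) ∨
      (∀ β, w i β = - w j (Fin.cast (congrArg n hgij) β)) :=
    fun i j hij hgij => pairwise_pm T hT hwUP hmaxG hmaxΦ hij hgij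
  refine ⟨Fm T w • tns w, smul_tns_mem hd _ w, ?_, sym_tensor_form hgs hd hpair _⟩
  have hS2 : ‖T - Fm T w • tns w‖^2 = ‖T‖^2 - (Fm T w)^2 := by
    rw [dist_sq_smul_tns T hwUP]; ring
  have hle : ∀ S' ∈ rankOneSet d p g n, ‖T - Fm T w • tns w‖^2 ≤ ‖T - S'‖^2 := by
    intro S' hS'
    rcases rankOne_normal_form hd hS' with rfl | ⟨u, huUP, Λ, hΛpos, rfl⟩
    · rw [hS2, sub_zero]
      nlinarith [sq_nonneg (Fm T w)]
    · rw [hS2, dist_sq_smul_tns T huUP]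
      have hG := hmaxG u huUP
      rw [Gm, Gm] at hG
      nlinarith [sq_nonneg (Λ - Fm T u)]
  have hdle : ∀ S' ∈ rankOneSet d p g n, dist T (Fm T w • tns w) ≤ dist T S' := by
    intro S' hS'
    rw [dist_eq_norm, dist_eq_norm]
    exact sq_le_imp_le (hle S' hS') (norm_nonneg _) (norm_nonneg _)
  refine le_antisymm (Metric.infDist_le_dist_of_mem (smul_tns_mem hd _ w)) ?_ |>.symm
  by_contra hlt
  push_neg at hlt
  obtain ⟨y, hy, hylt⟩ := (Metric.infDist_lt_iff ⟨0, zero_mem_rankOne hd⟩).1 hlt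
  exact absurd hylt (not_lt.2 (hdle y hy))

end PartI

section PartII

lemma z_app_congr (z : ∀ k, Fin (n k) → ℝ) {k k' : Fin p} (h : k' = k) (β : Fin (n k'))
    (hc : n k' = n k) : z k (Fin.cast hc β) = z k' β := by
  subst h
  exact congrArg (z k') (by apply Fin.ext; simp)

lemma omegaSym_mem {S : E d p g n} (hS : S ∈ omegaSymRankOne d p g n) :
    S ∈ Somega d p g n := by
  obtain ⟨ε, hε, z, hz⟩ := hS
  intro σ hσ idx
  rw [hz, hz]
  congr 1
  have key : ∀ i, z (g i) (Fin.cast (congrArg n (hσ i)) (idx (σ i))) = z (g (σ i)) (idx (σ i)) :=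
    fun i => z_app_congr z (hσ i) (idx (σ i)) (congrArg n (hσ i))
  rw [Finset.prod_congr rfl (fun i _ => key i)]
  exact Equiv.prod_comp σ (fun i => z (g i) (idx i))

lemma nearest_inner (hd : 1 ≤ d) (T : E d p g n) {S : E d p g n}
    (hS : S ∈ rankOneSet d p g n)
    (hbest : dist T S = Metric.infDist T (rankOneSet d p g n)) :
    (inner ℝ T S : ℝ) = ‖S‖^2 := by
  have hmem : ∀ t : ℝ, t • S ∈ rankOneSet d p g n := by
    intro t
    obtain ⟨w, hw⟩ := hS
    have hfe : S = tns w := PiLp.ext hw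
    rw [hfe]
    exact smul_tns_mem hd t w
  have hge : ∀ t : ℝ, ‖T - S‖^2 ≤ ‖T - t • S‖^2 := by
    intro t
    have h1 : dist T S ≤ dist T (t • S) := by
      rw [hbest]; exact Metric.infDist_le_dist_of_mem (hmem t)
    rw [dist_eq_norm, dist_eq_norm] at h1
    nlinarith [norm_nonneg (T - S), norm_nonneg (T - t • S)]
  rcases eq_or_ne S 0 with rfl | hS0
  · simp
  · have hexp : ∀ t : ℝ, ‖T - t • S‖^2 = ‖T‖^2 - 2*t*(inner ℝ T S : ℝ) + t^2 * ‖S‖^2 := by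
      intro t
      rw [norm_sub_sq_real, real_inner_smul_right, norm_smul, mul_pow]
      simp [Real.norm_eq_abs, sq_abs]
      ring
    have hn2 : (0:ℝ) < ‖S‖^2 := by
      have := norm_pos_iff.2 hS0
      positivity
    set t₀ : ℝ := (inner ℝ T S : ℝ)/‖S‖^2 with ht₀
    have hI : (inner ℝ T S : ℝ) = t₀ * ‖S‖^2 := by
      rw [ht₀, div_mul_cancel₀ _ hn2.ne']
    have h1 := hge t₀
    rw [hexp t₀] at h1
    have hL := hexp 1
    rw [one_smul] at hL
    rw [hL, hI] at h1
    have h2 : 0 ≤ -(‖S‖^2) * (t₀ - 1)^2 := by nlinarith [h1]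
    have h3 : (t₀ - 1)^2 = 0 := by
      have h4 : ‖S‖^2 * (t₀-1)^2 = 0 := le_antisymm (by linarith) (by positivity)
      exact (mul_eq_zero.1 h4).resolve_left hn2.ne'
    have h5 : t₀ = 1 := by
      have := pow_eq_zero_iff two_ne_zero |>.1 h3
      linarith
    rw [hI, h5, one_mul]

end PartII


end BR1A

set_option maxHeartbeats 2000000
set_option synthInstance.maxHeartbeats 1000000

open BR1A

/-- (i) Every `ω`-partially-symmetric tensor has a best rank one approximation
which is `ω`-symmetric; (ii) for almost every `ω`-partially-symmetric tensor
the best rank one approximation is unique and `ω`-symmetric. -/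
theorem best_rank_one_approx_omega_symmetric
    (d p : ℕ) (hd : 1 ≤ d) (hp : 1 ≤ p) (g : Fin d → Fin p)
    (hg : Function.Surjective g) (n : Fin p → ℕ) (hn : ∀ k, 1 ≤ n k)
    (μ : Measure (Somega d p g n)) [μ.IsAddHaarMeasure] :
    (∀ T ∈ Somega d p g n, ∃ S ∈ rankOneSet d p g n,
        dist T S = Metric.infDist T (rankOneSet d p g n) ∧
        S ∈ omegaSymRankOne d p g n) ∧
      ∀ᵐ (T : Somega d p g n) ∂μ, ∃ S,
        (S ∈ rankOneSet d p g n ∧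
          dist (T : TensorSpace d p g n) S =
            Metric.infDist (T : TensorSpace d p g n) (rankOneSet d p g n)) ∧
        S ∈ omegaSymRankOne d p g n ∧
        ∀ S', S' ∈ rankOneSet d p g n →
          dist (T : TensorSpace d p g n) S' =
            Metric.infDist (T : TensorSpace d p g n) (rankOneSet d p g n) →
          S' = S := by
  classical
  constructor
  · intro T hT
    exact part_i hd hg hn T hT
  · -- part (ii)
    haveI : BorelSpace (Somega d p g n) :=
      Subtype.borelSpace ((Somega d p g n : Set (TensorSpace d p g n)))
    set C := rankOneSet d p g n with hC
    set f : Somega d p g n → ℝ :=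
      fun v => Metric.infDist (v : TensorSpace d p g n) C with hfdef
    have hlip : LipschitzWith 1 f := by
      have h1 : LipschitzWith 1 (fun x : TensorSpace d p g n => Metric.infDist x C) :=
        Metric.lipschitz_infDist_pt C
      have h2 := h1.comp ((isometry_subtype_coe (s := (Somega d p g n : Set (TensorSpace d p g n)))).lipschitz)
      rw [mul_one] at h2
      exact h2
    have hae := hlip.ae_differentiableAt (μ := μ)
    filter_upwards [hae] with T hdiff
    obtain ⟨S, hSC, hSdist, hSsym⟩ := part_i hd hg hn (T : TensorSpace d p g n) T.2
    refine ⟨S, ⟨hSC, hSdist⟩, hSsym, ?_⟩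
    intro S' hS'C hS'dist
    set ι := (Somega d p g n).subtypeL with hι
    have grad : ∀ S₀ : TensorSpace d p g n, S₀ ∈ C →
        dist (T : TensorSpace d p g n) S₀
          = Metric.infDist (T : TensorSpace d p g n) C →
        ∀ v : Somega d p g n,
          2 * (inner ℝ ((T : TensorSpace d p g n) - S₀) (v : TensorSpace d p g n) : ℝ)
            = fderiv ℝ (fun u : Somega d p g n => (f u)^2) T v := by
      intro S₀ hS₀ hd₀ v
      have hu : HasFDerivAt (fun u : Somega d p g n => (u : TensorSpace d p g n) - S₀)
          (ι : Somega d p g n →L[ℝ] TensorSpace d p g n) T := by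
        exact (ι.hasFDerivAt (x := T)).sub_const S₀
      have hψ := HasFDerivAt.inner ℝ hu hu
      have hfd : DifferentiableAt ℝ (fun u : Somega d p g n => (f u)^2) T := hdiff.pow 2
      have hq : ∀ u : Somega d p g n,
          0 ≤ (inner ℝ ((u : TensorSpace d p g n) - S₀) ((u : TensorSpace d p g n) - S₀) : ℝ)
            - (f u)^2 := by
        intro u
        rw [real_inner_self_eq_norm_sq]
        have h1 : f u ≤ ‖(u : TensorSpace d p g n) - S₀‖ := by
          rw [← dist_eq_norm]
          exact Metric.infDist_le_dist_of_mem hS₀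
        have h2 : 0 ≤ f u := Metric.infDist_nonneg
        nlinarith [h1, h2]
      have hqT : (inner ℝ ((T : TensorSpace d p g n) - S₀)
          ((T : TensorSpace d p g n) - S₀) : ℝ) - (f T)^2 = 0 := by
        rw [real_inner_self_eq_norm_sq]
        have : f T = ‖(T : TensorSpace d p g n) - S₀‖ := by
          show Metric.infDist (↑T) C = _
          rw [← hd₀, dist_eq_norm]
        rw [this]
        ring
      have hmin : IsLocalMin (fun u : Somega d p g n =>
          (inner ℝ ((u : TensorSpace d p g n) - S₀) ((u : TensorSpace d p g n) - S₀) : ℝ)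
            - (f u)^2) T :=
        Filter.Eventually.of_forall fun u => le_trans (le_of_eq hqT) (hq u)
      have hfderiv0 := hmin.fderiv_eq_zero
      have hsub : fderiv ℝ (fun u : Somega d p g n =>
          (inner ℝ ((u : TensorSpace d p g n) - S₀) ((u : TensorSpace d p g n) - S₀) : ℝ)
            - (f u)^2) T
          = fderiv ℝ (fun u : Somega d p g n =>
              (inner ℝ ((u : TensorSpace d p g n) - S₀) ((u : TensorSpace d p g n) - S₀) : ℝ)) T
            - fderiv ℝ (fun u : Somega d p g n => (f u)^2) T :=
        fderiv_sub hψ.differentiableAt hfd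
      have hψeq : fderiv ℝ (fun u : Somega d p g n =>
          (inner ℝ ((u : TensorSpace d p g n) - S₀) ((u : TensorSpace d p g n) - S₀) : ℝ)) T
          = fderiv ℝ (fun u : Somega d p g n => (f u)^2) T := by
        have := hfderiv0
        rw [hsub] at this
        exact sub_eq_zero.1 this
      have hψval := hψ.fderiv
      calc 2 * (inner ℝ ((T : TensorSpace d p g n) - S₀) (v : TensorSpace d p g n) : ℝ)
          = ((fderivInnerCLM ℝ (((T : TensorSpace d p g n) - S₀),
              ((T : TensorSpace d p g n) - S₀))).comp (ι.prod ι)) v := by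
            simp only [ContinuousLinearMap.comp_apply, ContinuousLinearMap.prod_apply,
              fderivInnerCLM_apply, hι, Submodule.subtypeL_apply]
            rw [real_inner_comm ((v : TensorSpace d p g n)) ((T : TensorSpace d p g n) - S₀)]
            ring
        _ = fderiv ℝ (fun u : Somega d p g n =>
            (inner ℝ ((u : TensorSpace d p g n) - S₀) ((u : TensorSpace d p g n) - S₀) : ℝ)) T v := by
            rw [hψval]
        _ = fderiv ℝ (fun u : Somega d p g n => (f u)^2) T v := by rw [hψeq]
    have h1 := grad S hSC hSdist
    have h2 := grad S' hS'C hS'dist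
    have horth : ∀ v : Somega d p g n,
        (inner ℝ (S' - S) (v : TensorSpace d p g n) : ℝ) = 0 := by
      intro v
      have h3 : (inner ℝ ((T : TensorSpace d p g n) - S) (v : TensorSpace d p g n) : ℝ)
          = inner ℝ ((T : TensorSpace d p g n) - S') (v : TensorSpace d p g n) := by
        have := (h1 v).trans (h2 v).symm
        linarith
      have h4 : S' - S = ((T : TensorSpace d p g n) - S) - ((T : TensorSpace d p g n) - S') := by
        abel
      rw [h4, inner_sub_left, h3, sub_self]
    have hSV : S ∈ Somega d p g n := omegaSym_mem hSsym
    have hiS : (inner ℝ (T : TensorSpace d p g n) S : ℝ) = ‖S‖^2 :=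
      nearest_inner hd _ hSC hSdist
    have hiS' : (inner ℝ (T : TensorSpace d p g n) S' : ℝ) = ‖S'‖^2 :=
      nearest_inner hd _ hS'C hS'dist
    have hdd : ‖(T : TensorSpace d p g n) - S‖ = ‖(T : TensorSpace d p g n) - S'‖ := by
      rw [← dist_eq_norm, ← dist_eq_norm, hSdist, hS'dist]
    have hnorm : ‖S'‖^2 = ‖S‖^2 := by
      have e1 := norm_sub_sq_real (T : TensorSpace d p g n) S
      have e2 := norm_sub_sq_real (T : TensorSpace d p g n) S'
      rw [hiS] at e1
      rw [hiS'] at e2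
      have e3 : ‖(T : TensorSpace d p g n) - S‖^2 = ‖(T : TensorSpace d p g n) - S'‖^2 := by
        rw [hdd]
      linarith
    have hfin : ‖S' - S‖^2 = 0 := by
      have e3 := norm_sub_sq_real S' S
      have h5 := horth ⟨S, hSV⟩
      rw [inner_sub_left] at h5
      have h6 : (inner ℝ S S : ℝ) = ‖S‖^2 := real_inner_self_eq_norm_sq S
      have h7 : (inner ℝ S' S : ℝ) = ‖S‖^2 := by
        rw [h6] at h5
        linarith
      rw [h7, hnorm] at e3
      linarith
    have h8 : S' - S = 0 := by
      have := pow_eq_zero_iff two_ne_zero |>.1 hfin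
      exact norm_eq_zero.1 this
    exact sub_eq_zero.1 h8
end
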